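/- arXiv:1712.09105 — 7 statements merged into one kernel-verified Lean document; each statement's English description precedes it below -/
import Mathlib

section
/- Let β, φ, γ, ρ : [0,∞) → ℝ be continuous and nonnegative, and let p∞ : [0,∞) → ℝ be a nonnegative integrable function with ∫₀^∞ p∞(a) da = 1 and ∫₀^∞ p∞(a) (∫₀^a β(h) dh) da < ∞. Define R₀ := ∫₀^∞ ∫₀^a p∞(a) β(τ) exp(−∫_τ^a (φ(k)+γ(k)) dk) dτ da. If R₀ > 1, then there exist B ∈ (0,1) and continuously differentiable functions s*, i*, r* : [0,∞) → ℝ satisfying s*(0) = 1, i*(0) = 0, r*(0) = 0, the steady-state system ds*/da = −B β(a) s*(a), di*/da = B β(a) s*(a) − (φ(a)+γ(a)) i*(a) + B ρ(a) r*(a), dr*/da = (φ(a)+γ(a)) i*(a) − B ρ(a) r*(a), and the fixed-point condition B = ∫₀^∞ i*(a) p∞(a) da. -/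
set_option maxHeartbeats 1000000

open Set MeasureTheory intervalIntegral

namespace EndemicAux

variable (β c ρ : ℝ → ℝ)

noncomputable def K (a : ℝ) : ℝ := ∫ h in (0:ℝ)..a, β h
noncomputable def E (a : ℝ) : ℝ := ∫ k in (0:ℝ)..a, c k
noncomputable def P (a : ℝ) : ℝ := ∫ k in (0:ℝ)..a, ρ k
noncomputable def sfun (B a : ℝ) : ℝ := Real.exp (-(B * K β a))
noncomputable def gfun (B τ : ℝ) : ℝ :=
  c τ * (1 - sfun β B τ) * Real.exp (E c τ + B * P ρ τ)
noncomputable def Rfun (B a : ℝ) : ℝ := ∫ τ in (0:ℝ)..a, gfun β c ρ B τ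
noncomputable def rfun (B a : ℝ) : ℝ :=
  Real.exp (-(E c a + B * P ρ a)) * Rfun β c ρ B a
noncomputable def ifun (B a : ℝ) : ℝ := (1 - sfun β B a) - rfun β c ρ B a

variable {β c ρ}
variable (hβ : Continuous β) (hc : Continuous c) (hρ : Continuous ρ)

set_option linter.unusedSectionVars false
include hβ hc hρ

section deriv

lemma K_deriv (a : ℝ) : HasDerivAt (K β) (β a) a :=
  (hβ.integral_hasStrictDerivAt 0 a).hasDerivAt

lemma E_deriv (a : ℝ) : HasDerivAt (E c) (c a) a :=
  (hc.integral_hasStrictDerivAt 0 a).hasDerivAt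

lemma P_deriv (a : ℝ) : HasDerivAt (P ρ) (ρ a) a :=
  (hρ.integral_hasStrictDerivAt 0 a).hasDerivAt

lemma K_cont : Continuous (K β) :=
  continuous_primitive (fun a b => hβ.intervalIntegrable a b) 0

lemma E_cont : Continuous (E c) :=
  continuous_primitive (fun a b => hc.intervalIntegrable a b) 0

lemma P_cont : Continuous (P ρ) :=
  continuous_primitive (fun a b => hρ.intervalIntegrable a b) 0

lemma sfun_deriv (B a : ℝ) :
    HasDerivAt (sfun β B) (-(B * β a * sfun β B a)) a := by
  have h := ((K_deriv hβ hc hρ a).const_mul B).neg.exp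
  change HasDerivAt (fun x => Real.exp (-(B * K β x))) (-(B * β a * Real.exp (-(B * K β a)))) a
  simpa [sfun, mul_comm, mul_left_comm, mul_assoc] using h

lemma sfun_cont2 : Continuous fun p : ℝ × ℝ => sfun β p.1 p.2 :=
  (((continuous_fst.mul ((K_cont hβ hc hρ).comp continuous_snd)).neg).rexp)

lemma gfun_cont2 : Continuous fun p : ℝ × ℝ => gfun β c ρ p.1 p.2 := by
  unfold gfun
  exact ((hc.comp continuous_snd).mul
      (continuous_const.sub (sfun_cont2 hβ hc hρ))).mul
    ((((E_cont hβ hc hρ).comp continuous_snd).add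
      (continuous_fst.mul ((P_cont hβ hc hρ).comp continuous_snd))).rexp)

lemma gfun_cont (B : ℝ) : Continuous (gfun β c ρ B) :=
  (gfun_cont2 hβ hc hρ).comp (Continuous.prodMk_right B)

lemma Rfun_deriv (B a : ℝ) :
    HasDerivAt (Rfun β c ρ B) (gfun β c ρ B a) a :=
  ((gfun_cont hβ hc hρ B).integral_hasStrictDerivAt 0 a).hasDerivAt

lemma rfun_deriv (B a : ℝ) :
    HasDerivAt (rfun β c ρ B)
      (c a * ifun β c ρ B a - B * ρ a * rfun β c ρ B a) a := by
  have hQ : HasDerivAt (fun a => E c a + B * P ρ a) (c a + B * ρ a) a :=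
    (E_deriv hβ hc hρ a).add ((P_deriv hβ hc hρ a).const_mul B)
  have h := hQ.neg.exp.mul (Rfun_deriv hβ hc hρ B a)
  change HasDerivAt (rfun β c ρ B) (Real.exp (-(E c a + B * P ρ a)) * -(c a + B * ρ a) *
      Rfun β c ρ B a + Real.exp (-(E c a + B * P ρ a)) * gfun β c ρ B a) a at h
  convert h using 1
  simp only [ifun, rfun, gfun]
  rw [Real.exp_neg]
  have hx : Real.exp (E c a + B * P ρ a) ≠ 0 := Real.exp_ne_zero _
  field_simp
  ring

lemma ifun_deriv (B a : ℝ) :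
    HasDerivAt (ifun β c ρ B)
      (B * β a * sfun β B a - c a * ifun β c ρ B a + B * ρ a * rfun β c ρ B a) a := by
  have h := ((sfun_deriv hβ hc hρ B a).const_sub 1).sub (rfun_deriv hβ hc hρ B a)
  refine h.congr_deriv ?_
  ring

end deriv


section bounds

variable (hβ0 : ∀ x, 0 ≤ β x) (hc0 : ∀ x, 0 ≤ c x) (hρ0 : ∀ x, 0 ≤ ρ x)
include hβ0 hc0 hρ0

lemma prim_mono {f : ℝ → ℝ} (hf : Continuous f) (hf0 : ∀ x, 0 ≤ f x)
    {τ a : ℝ} (h : τ ≤ a) :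
    (∫ x in (0:ℝ)..τ, f x) ≤ ∫ x in (0:ℝ)..a, f x := by
  have hadd := integral_add_adjacent_intervals (hf.intervalIntegrable 0 τ)
    (hf.intervalIntegrable τ a) (μ := volume)
  have hpos : 0 ≤ ∫ x in τ..a, f x :=
    intervalIntegral.integral_nonneg h (fun x _ => hf0 x)
  linarith

lemma prim_nonneg {f : ℝ → ℝ} (hf : Continuous f) (hf0 : ∀ x, 0 ≤ f x)
    {a : ℝ} (h : 0 ≤ a) : 0 ≤ ∫ x in (0:ℝ)..a, f x := by
  have := prim_mono hβ hc hρ hβ0 hc0 hρ0 hf hf0 h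
  simpa using this

lemma K_nonneg {a : ℝ} (h : 0 ≤ a) : 0 ≤ K β a :=
  prim_nonneg hβ hc hρ hβ0 hc0 hρ0 hβ hβ0 h

lemma sfun_pos (B a : ℝ) : 0 < sfun β B a := Real.exp_pos _

lemma sfun_le_one {B a : ℝ} (hB : 0 ≤ B) (ha : 0 ≤ a) : sfun β B a ≤ 1 := by
  have := K_nonneg hβ hc hρ hβ0 hc0 hρ0 ha (a := a)
  have : 0 ≤ B * K β a := mul_nonneg hB this
  simpa [sfun, Real.exp_le_one_iff] using by linarith

lemma one_sub_sfun_le {B a : ℝ} (hB : 0 ≤ B) (ha : 0 ≤ a) :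
    1 - sfun β B a ≤ B * K β a := by
  have h1 : 0 ≤ B * K β a := mul_nonneg hB (K_nonneg hβ hc hρ hβ0 hc0 hρ0 ha)
  have := Real.add_one_le_exp (-(B * K β a))
  simp only [sfun]; linarith

lemma gfun_nonneg {B τ : ℝ} (hB : 0 ≤ B) (hτ : 0 ≤ τ) : 0 ≤ gfun β c ρ B τ := by
  have h1 : sfun β B τ ≤ 1 := sfun_le_one hβ hc hρ hβ0 hc0 hρ0 hB hτ
  exact mul_nonneg (mul_nonneg (hc0 τ) (by linarith)) (Real.exp_pos _).le

lemma Rfun_nonneg {B a : ℝ} (hB : 0 ≤ B) (ha : 0 ≤ a) : 0 ≤ Rfun β c ρ B a :=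
  intervalIntegral.integral_nonneg ha
    (fun τ hτ => gfun_nonneg hβ hc hρ hβ0 hc0 hρ0 hB hτ.1)

lemma rfun_nonneg {B a : ℝ} (hB : 0 ≤ B) (ha : 0 ≤ a) : 0 ≤ rfun β c ρ B a :=
  mul_nonneg (Real.exp_pos _).le (Rfun_nonneg hβ hc hρ hβ0 hc0 hρ0 hB ha)

lemma exp_ftc (B a : ℝ) :
    (∫ τ in (0:ℝ)..a, (c τ + B * ρ τ) * Real.exp (E c τ + B * P ρ τ))
      = Real.exp (E c a + B * P ρ a) - 1 := by
  have hd : ∀ τ ∈ uIcc (0:ℝ) a,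
      HasDerivAt (fun τ => Real.exp (E c τ + B * P ρ τ))
        ((c τ + B * ρ τ) * Real.exp (E c τ + B * P ρ τ)) τ := by
    intro τ _
    have hQ : HasDerivAt (fun τ => E c τ + B * P ρ τ) (c τ + B * ρ τ) τ :=
      (E_deriv hβ hc hρ τ).add ((P_deriv hβ hc hρ τ).const_mul B)
    simpa [mul_comm] using hQ.exp
  have hcont : Continuous fun τ => (c τ + B * ρ τ) * Real.exp (E c τ + B * P ρ τ) :=
    (hc.add (continuous_const.mul hρ)).mul
      (((E_cont hβ hc hρ).add (continuous_const.mul (P_cont hβ hc hρ))).rexp)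
  rw [integral_eq_sub_of_hasDerivAt hd (hcont.intervalIntegrable 0 a)]
  simp [E, P]

lemma Rfun_le {B a : ℝ} (hB : 0 ≤ B) (ha : 0 ≤ a) :
    Rfun β c ρ B a ≤ (B * K β a) * (Real.exp (E c a + B * P ρ a) - 1) := by
  have hstep : ∀ τ ∈ Icc (0:ℝ) a, gfun β c ρ B τ
      ≤ (B * K β a) * ((c τ + B * ρ τ) * Real.exp (E c τ + B * P ρ τ)) := by
    intro τ hτ
    have hu : 1 - sfun β B τ ≤ B * K β a := by
      have h1 := one_sub_sfun_le hβ hc hρ hβ0 hc0 hρ0 hB hτ.1 (a := τ)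
      have h2 : K β τ ≤ K β a := prim_mono hβ hc hρ hβ0 hc0 hρ0 hβ hβ0 hτ.2
      nlinarith
    have hu0 : 0 ≤ 1 - sfun β B τ := by
      have := sfun_le_one hβ hc hρ hβ0 hc0 hρ0 hB hτ.1 (a := τ); linarith
    have hexp : (0:ℝ) < Real.exp (E c τ + B * P ρ τ) := Real.exp_pos _
    have hcρ : c τ ≤ c τ + B * ρ τ := by nlinarith [hρ0 τ]
    calc c τ * (1 - sfun β B τ) * Real.exp (E c τ + B * P ρ τ)
        ≤ c τ * (B * K β a) * Real.exp (E c τ + B * P ρ τ) := by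
          exact mul_le_mul_of_nonneg_right
            (mul_le_mul_of_nonneg_left hu (hc0 τ)) hexp.le
      _ ≤ (c τ + B * ρ τ) * (B * K β a) * Real.exp (E c τ + B * P ρ τ) := by
          have h0 : 0 ≤ B * K β a := mul_nonneg hB (K_nonneg hβ hc hρ hβ0 hc0 hρ0 ha)
          exact mul_le_mul_of_nonneg_right
            (mul_le_mul_of_nonneg_right hcρ h0) hexp.le
      _ = (B * K β a) * ((c τ + B * ρ τ) * Real.exp (E c τ + B * P ρ τ)) := by ring
  have hcont : Continuous fun τ => (B * K β a) *
      ((c τ + B * ρ τ) * Real.exp (E c τ + B * P ρ τ)) :=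
    continuous_const.mul ((hc.add (continuous_const.mul hρ)).mul
      (((E_cont hβ hc hρ).add (continuous_const.mul (P_cont hβ hc hρ))).rexp))
  have hmono := intervalIntegral.integral_mono_on (μ := volume) ha
    ((gfun_cont hβ hc hρ B).intervalIntegrable 0 a)
    (hcont.intervalIntegrable 0 a) hstep
  calc Rfun β c ρ B a ≤ ∫ τ in (0:ℝ)..a,
        (B * K β a) * ((c τ + B * ρ τ) * Real.exp (E c τ + B * P ρ τ)) := hmono
    _ = (B * K β a) * (Real.exp (E c a + B * P ρ a) - 1) := by
        rw [intervalIntegral.integral_const_mul, exp_ftc hβ hc hρ hβ0 hc0 hρ0]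

lemma rfun_le {B a : ℝ} (hB : 0 ≤ B) (ha : 0 ≤ a) :
    rfun β c ρ B a ≤ B * K β a := by
  have hR := Rfun_le hβ hc hρ hβ0 hc0 hρ0 hB ha
  have hQ : (0:ℝ) ≤ E c a + B * P ρ a := by
    have h1 := prim_nonneg hβ hc hρ hβ0 hc0 hρ0 hc hc0 ha
    have h2 := prim_nonneg hβ hc hρ hβ0 hc0 hρ0 hρ hρ0 ha
    have h3 : (0:ℝ) ≤ E c a := h1
    have h4 : (0:ℝ) ≤ P ρ a := h2
    nlinarith
  have he : Real.exp (-(E c a + B * P ρ a)) * Real.exp (E c a + B * P ρ a) = 1 := by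
    rw [← Real.exp_add, show -(E c a + B * P ρ a) + (E c a + B * P ρ a) = 0 by ring,
      Real.exp_zero]
  have he1 : Real.exp (-(E c a + B * P ρ a)) ≤ 1 := by
    rw [Real.exp_le_one_iff]; linarith
  have he0 : 0 < Real.exp (-(E c a + B * P ρ a)) := Real.exp_pos _
  have hBK : 0 ≤ B * K β a := mul_nonneg hB (K_nonneg hβ hc hρ hβ0 hc0 hρ0 ha)
  calc rfun β c ρ B a ≤ Real.exp (-(E c a + B * P ρ a)) *
        ((B * K β a) * (Real.exp (E c a + B * P ρ a) - 1)) := by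
        exact mul_le_mul_of_nonneg_left hR he0.le
    _ = B * K β a * (1 - Real.exp (-(E c a + B * P ρ a))) := by
        nlinarith [he]
    _ ≤ B * K β a := by nlinarith

lemma ifun_abs_le {B a : ℝ} (hB : 0 ≤ B) (ha : 0 ≤ a) :
    |ifun β c ρ B a| ≤ B * K β a := by
  have h1 := one_sub_sfun_le hβ hc hρ hβ0 hc0 hρ0 hB ha
  have h2 : sfun β B a ≤ 1 := sfun_le_one hβ hc hρ hβ0 hc0 hρ0 hB ha
  have h3 := rfun_nonneg hβ hc hρ hβ0 hc0 hρ0 hB ha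
  have h4 := rfun_le hβ hc hρ hβ0 hc0 hρ0 hB ha
  rw [abs_le]; constructor <;> simp only [ifun] <;> nlinarith

end bounds

lemma sfun_zero (B : ℝ) : sfun β B 0 = 1 := by simp [sfun, K]

lemma rfun_zero (B : ℝ) : rfun β c ρ B 0 = 0 := by simp [rfun, Rfun]

lemma ifun_zero (B : ℝ) : ifun β c ρ B 0 = 0 := by
  simp [ifun, sfun_zero, rfun_zero, sfun, K, rfun, Rfun]


section param

lemma Rfun_cont_B (a : ℝ) : Continuous fun B => Rfun β c ρ B a := by
  have := continuous_parametric_intervalIntegral_of_continuous (μ := volume)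
    (f := fun B τ => gfun β c ρ B τ) (a₀ := 0)
    (by exact gfun_cont2 hβ hc hρ) (s := fun _ : ℝ => a) continuous_const
  exact this

lemma ifun_cont_B (a : ℝ) : Continuous fun B => ifun β c ρ B a := by
  unfold ifun sfun rfun
  refine (continuous_const.sub ?_).sub (Continuous.mul ?_ (Rfun_cont_B hβ hc hρ a))
  · exact ((continuous_id.mul continuous_const).neg).rexp
  · exact ((continuous_const.add (continuous_id.mul continuous_const)).neg).rexp

lemma ifun_cont_a (B : ℝ) : Continuous fun a => ifun β c ρ B a := by
  unfold ifun sfun rfun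
  refine (continuous_const.sub ?_).sub (Continuous.mul ?_ ?_)
  · exact ((continuous_const.mul (K_cont hβ hc hρ)).neg).rexp
  · exact (((E_cont hβ hc hρ).add (continuous_const.mul (P_cont hβ hc hρ))).neg).rexp
  · exact continuous_primitive (fun a b => (gfun_cont hβ hc hρ B).intervalIntegrable a b) 0

end param

variable (β c ρ)

noncomputable def ifun0 (a : ℝ) : ℝ :=
  K β a - Real.exp (-(E c a)) * ∫ τ in (0:ℝ)..a, c τ * K β τ * Real.exp (E c τ)

variable {β c ρ}

lemma ibp (a : ℝ) :
    Real.exp (-(E c a)) * ∫ τ in (0:ℝ)..a, β τ * Real.exp (E c τ)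
      = ifun0 β c a := by
  have hd : ∀ τ ∈ uIcc (0:ℝ) a,
      HasDerivAt (fun τ => K β τ * Real.exp (E c τ))
        (β τ * Real.exp (E c τ) + c τ * K β τ * Real.exp (E c τ)) τ := by
    intro τ _
    have := (K_deriv hβ hc hρ τ).mul ((E_deriv hβ hc hρ τ).exp)
    refine this.congr_deriv ?_
    ring
  have hcont : Continuous fun τ =>
      β τ * Real.exp (E c τ) + c τ * K β τ * Real.exp (E c τ) :=
    (hβ.mul ((E_cont hβ hc hρ).rexp)).add
      ((hc.mul (K_cont hβ hc hρ)).mul ((E_cont hβ hc hρ).rexp))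
  have hftc := integral_eq_sub_of_hasDerivAt hd (hcont.intervalIntegrable 0 a)
  have hsplit : (∫ τ in (0:ℝ)..a,
        (β τ * Real.exp (E c τ) + c τ * K β τ * Real.exp (E c τ)))
      = (∫ τ in (0:ℝ)..a, β τ * Real.exp (E c τ))
        + ∫ τ in (0:ℝ)..a, c τ * K β τ * Real.exp (E c τ) :=
    integral_add ((hβ.mul ((E_cont hβ hc hρ).rexp)).intervalIntegrable 0 a)
      (((hc.mul (K_cont hβ hc hρ)).mul ((E_cont hβ hc hρ).rexp)).intervalIntegrable 0 a)
  rw [hsplit] at hftc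
  have h0 : K β 0 = 0 := by simp [K]
  rw [h0] at hftc
  have hexp : Real.exp (-(E c a)) * Real.exp (E c a) = 1 := by
    rw [← Real.exp_add]; simp
  unfold ifun0
  have : (∫ τ in (0:ℝ)..a, β τ * Real.exp (E c τ))
      = K β a * Real.exp (E c a) - ∫ τ in (0:ℝ)..a, c τ * K β τ * Real.exp (E c τ) := by
    linarith
  rw [this]
  linear_combination (K β a) * hexp

lemma ifun_div_tendsto {a : ℝ} (hβ0 : ∀ x, 0 ≤ β x) (hc0 : ∀ x, 0 ≤ c x)
    (hρ0 : ∀ x, 0 ≤ ρ x) (ha : 0 ≤ a) :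
    Filter.Tendsto (fun B => ifun β c ρ B a / B) (nhdsWithin 0 (Ioi 0))
      (nhds (ifun0 β c a)) := by
  -- the slope limit for 1 - s
  have hu : ∀ τ : ℝ, Filter.Tendsto (fun B => (1 - sfun β B τ) / B)
      (nhdsWithin 0 (Ioi 0)) (nhds (K β τ)) := by
    intro τ
    have hf : HasDerivAt (fun B : ℝ => 1 - Real.exp (-(B * K β τ))) (K β τ) 0 := by
      have h1 : HasDerivAt (fun B : ℝ => B * K β τ) (K β τ) 0 := hasDerivAt_mul_const _
      have h2 := h1.neg.exp
      have h3 := h2.const_sub 1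
      simpa using h3
    have hslope := hasDerivAt_iff_tendsto_slope.mp hf
    have hcongr : ∀ B : ℝ, slope (fun B : ℝ => 1 - Real.exp (-(B * K β τ))) 0 B
        = (1 - sfun β B τ) / B := by
      intro B; simp [slope_def_field, sfun]
    refine (hslope.congr hcongr).mono_left (nhdsWithin_mono _ ?_)
    intro x hx; exact ne_of_gt hx
  -- limit of R/B
  have hRlim : Filter.Tendsto (fun B => Rfun β c ρ B a / B) (nhdsWithin 0 (Ioi 0))
      (nhds (∫ τ in (0:ℝ)..a, c τ * K β τ * Real.exp (E c τ))) := by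
    have heq : ∀ B : ℝ, Rfun β c ρ B a / B = ∫ τ in (0:ℝ)..a, gfun β c ρ B τ / B := by
      intro B; rw [Rfun, intervalIntegral.integral_div]
    simp only [heq]
    refine intervalIntegral.tendsto_integral_filter_of_dominated_convergence
      (fun τ => c τ * (K β a * Real.exp (E c a + P ρ a))) ?_ ?_ ?_ ?_
    · exact Filter.Eventually.of_forall fun B =>
        ((gfun_cont hβ hc hρ B).div_const B).aestronglyMeasurable
    · have hmem : Ioc (0:ℝ) 1 ∈ nhdsWithin (0:ℝ) (Ioi 0) :=
        Ioc_mem_nhdsGT_of_mem (by constructor <;> norm_num)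
      refine Filter.eventually_iff_exists_mem.mpr ⟨Ioc 0 1, hmem, fun B hB => ?_⟩
      refine Filter.Eventually.of_forall fun τ hτ => ?_
      rw [uIoc_of_le ha] at hτ
      have hτ0 : 0 ≤ τ := hτ.1.le
      have hτa : τ ≤ a := hτ.2
      have hg0 : 0 ≤ gfun β c ρ B τ / B :=
        div_nonneg (gfun_nonneg hβ hc hρ hβ0 hc0 hρ0 hB.1.le hτ0) hB.1.le
      rw [Real.norm_eq_abs, abs_of_nonneg hg0]
      have hub : (1 - sfun β B τ) / B ≤ K β τ := by
        rw [div_le_iff₀ hB.1]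
        have := one_sub_sfun_le hβ hc hρ hβ0 hc0 hρ0 hB.1.le hτ0 (a := τ)
        linarith [this]
      have hKτ : K β τ ≤ K β a := prim_mono hβ hc hρ hβ0 hc0 hρ0 hβ hβ0 hτa
      have hQ : E c τ + B * P ρ τ ≤ E c a + P ρ a := by
        have h1 : E c τ ≤ E c a := prim_mono hβ hc hρ hβ0 hc0 hρ0 hc hc0 hτa
        have h2 : P ρ τ ≤ P ρ a := prim_mono hβ hc hρ hβ0 hc0 hρ0 hρ hρ0 hτa
        have h3 : 0 ≤ P ρ τ := prim_nonneg hβ hc hρ hβ0 hc0 hρ0 hρ hρ0 hτ0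
        nlinarith [hB.2]
      have hgB : gfun β c ρ B τ / B
          = c τ * ((1 - sfun β B τ) / B) * Real.exp (E c τ + B * P ρ τ) := by
        simp only [gfun, div_eq_mul_inv]; ring
      rw [hgB]
      have hu0 : 0 ≤ (1 - sfun β B τ) / B := by
        have := sfun_le_one hβ hc hρ hβ0 hc0 hρ0 hB.1.le hτ0 (a := τ)
        exact div_nonneg (by linarith) hB.1.le
      calc c τ * ((1 - sfun β B τ) / B) * Real.exp (E c τ + B * P ρ τ)
          ≤ c τ * K β τ * Real.exp (E c τ + B * P ρ τ) :=
            mul_le_mul_of_nonneg_right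
              (mul_le_mul_of_nonneg_left hub (hc0 τ)) (Real.exp_pos _).le
        _ ≤ c τ * K β a * Real.exp (E c a + P ρ a) := by
            have hK0 : 0 ≤ K β τ := K_nonneg hβ hc hρ hβ0 hc0 hρ0 hτ0
            have hee := Real.exp_le_exp.mpr hQ
            have hcK : c τ * K β τ ≤ c τ * K β a := mul_le_mul_of_nonneg_left hKτ (hc0 τ)
            have hKa0 : 0 ≤ K β τ := hK0
            exact mul_le_mul hcK hee (Real.exp_pos _).le
              (mul_nonneg (hc0 τ) (le_trans hK0 hKτ))
        _ = c τ * (K β a * Real.exp (E c a + P ρ a)) := by ring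
    · exact (hc.mul continuous_const).intervalIntegrable 0 a
    · refine Filter.Eventually.of_forall fun τ hτ => ?_
      rw [uIoc_of_le ha] at hτ
      have hgB : ∀ B : ℝ, gfun β c ρ B τ / B
          = c τ * ((1 - sfun β B τ) / B) * Real.exp (E c τ + B * P ρ τ) := fun B => by
        simp only [gfun, div_eq_mul_inv]; ring
      have hexp : Filter.Tendsto (fun B : ℝ => Real.exp (E c τ + B * P ρ τ))
          (nhdsWithin 0 (Ioi 0)) (nhds (Real.exp (E c τ))) := by
        have : Filter.Tendsto (fun B : ℝ => Real.exp (E c τ + B * P ρ τ))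
            (nhds 0) (nhds (Real.exp (E c τ + 0 * P ρ τ))) :=
          (Continuous.tendsto (by fun_prop) 0)
        simpa using this.mono_left nhdsWithin_le_nhds
      have := ((hu τ).const_mul (c τ)).mul hexp
      exact Filter.Tendsto.congr (fun B => (hgB B).symm) this
  -- combine
  have heq : ∀ B : ℝ, ifun β c ρ B a / B
      = (1 - sfun β B a) / B
        - Real.exp (-(E c a + B * P ρ a)) * (Rfun β c ρ B a / B) := by
    intro B
    rw [ifun, rfun, sub_div, mul_div_assoc]
  simp only [heq]
  have hexpQ : Filter.Tendsto (fun B : ℝ => Real.exp (-(E c a + B * P ρ a)))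
      (nhdsWithin 0 (Ioi 0)) (nhds (Real.exp (-(E c a)))) := by
    have : Filter.Tendsto (fun B : ℝ => Real.exp (-(E c a + B * P ρ a)))
        (nhds 0) (nhds (Real.exp (-(E c a + 0 * P ρ a)))) :=
      (Continuous.tendsto (by fun_prop) 0)
    simpa using this.mono_left nhdsWithin_le_nhds
  exact (hu a).sub (hexpQ.mul hRlim)


theorem exists_fixed_point {pinf : ℝ → ℝ}
    (hβ0 : ∀ x, 0 ≤ β x) (hc0 : ∀ x, 0 ≤ c x) (hρ0 : ∀ x, 0 ≤ ρ x)
    (hp0 : ∀ a ∈ Ioi (0:ℝ), 0 ≤ pinf a)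
    (hp_int : IntegrableOn pinf (Ioi 0))
    (hp_one : ∫ a in Ioi (0:ℝ), pinf a = 1)
    (hβ_int : IntegrableOn (fun a => pinf a * K β a) (Ioi 0))
    (hR0 : 1 < ∫ a in Ioi (0:ℝ), ifun0 β c a * pinf a) :
    ∃ B ∈ Ioo (0:ℝ) 1, B = ∫ a in Ioi (0:ℝ), ifun β c ρ B a * pinf a := by
  set F : ℝ → ℝ := fun B => ∫ a in Ioi (0:ℝ), ifun β c ρ B a * pinf a with hFdef
  have hmeas : ∀ B : ℝ, AEStronglyMeasurable (fun a => ifun β c ρ B a * pinf a)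
      (volume.restrict (Ioi 0)) := fun B =>
    ((ifun_cont_a hβ hc hρ B).aestronglyMeasurable).mul hp_int.1
  have hbound : ∀ B ∈ Icc (0:ℝ) 1, ∀ᵐ a ∂(volume.restrict (Ioi (0:ℝ))),
      ‖ifun β c ρ B a * pinf a‖ ≤ pinf a * K β a := by
    intro B hB
    rw [ae_restrict_iff' measurableSet_Ioi]
    refine Filter.Eventually.of_forall fun a ha => ?_
    have ha0 : (0:ℝ) ≤ a := le_of_lt ha
    have h1 : |ifun β c ρ B a| ≤ B * K β a :=
      ifun_abs_le hβ hc hρ hβ0 hc0 hρ0 hB.1 ha0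
    have hK : 0 ≤ K β a := K_nonneg hβ hc hρ hβ0 hc0 hρ0 ha0
    have hp : 0 ≤ pinf a := hp0 a ha
    rw [Real.norm_eq_abs, abs_mul, abs_of_nonneg hp]
    have h2 : |ifun β c ρ B a| ≤ K β a := by nlinarith [hB.2]
    nlinarith [mul_le_mul_of_nonneg_right h2 hp]
  have hFint : ∀ B ∈ Icc (0:ℝ) 1,
      Integrable (fun a => ifun β c ρ B a * pinf a) (volume.restrict (Ioi 0)) :=
    fun B hB => Integrable.mono' hβ_int (hmeas B) (hbound B hB)
  have hFcont : ContinuousOn F (Icc 0 1) :=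
    continuousOn_of_dominated (fun B _ => hmeas B) hbound hβ_int
      (Filter.Eventually.of_forall fun a =>
        ((ifun_cont_B hβ hc hρ a).mul continuous_const).continuousOn)
  -- F 1 < 1
  have hs_meas : AEStronglyMeasurable (fun a => sfun β 1 a * pinf a)
      (volume.restrict (Ioi 0)) := by
    refine (Continuous.aestronglyMeasurable ?_).mul hp_int.1
    exact ((continuous_const.mul (K_cont hβ hc hρ)).neg).rexp
  have hs_bound : ∀ᵐ a ∂(volume.restrict (Ioi (0:ℝ))),
      ‖sfun β 1 a * pinf a‖ ≤ pinf a := by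
    rw [ae_restrict_iff' measurableSet_Ioi]
    refine Filter.Eventually.of_forall fun a ha => ?_
    have h1 : sfun β 1 a ≤ 1 := sfun_le_one hβ hc hρ hβ0 hc0 hρ0 zero_le_one ha.le
    have h2 : 0 < sfun β 1 a := sfun_pos hβ hc hρ hβ0 hc0 hρ0 1 a
    have hp : 0 ≤ pinf a := hp0 a ha
    rw [Real.norm_eq_abs, abs_mul, abs_of_nonneg hp, abs_of_nonneg h2.le]
    nlinarith
  have hs_int : Integrable (fun a => sfun β 1 a * pinf a) (volume.restrict (Ioi 0)) :=
    Integrable.mono' hp_int hs_meas hs_bound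
  have ht0 : 0 < ∫ a in Ioi (0:ℝ), sfun β 1 a * pinf a := by
    have htnn : 0 ≤ᵐ[volume.restrict (Ioi (0:ℝ))] fun a => sfun β 1 a * pinf a :=
      (ae_restrict_iff' measurableSet_Ioi).mpr (Filter.Eventually.of_forall fun a ha =>
        mul_nonneg (sfun_pos hβ hc hρ hβ0 hc0 hρ0 1 a).le (hp0 a ha))
    rcases lt_or_eq_of_le (integral_nonneg_of_ae htnn) with h | h
    · exact h
    · exfalso
      have hz := (MeasureTheory.integral_eq_zero_iff_of_nonneg_ae htnn hs_int).mp h.symm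
      have hpz : pinf =ᵐ[volume.restrict (Ioi (0:ℝ))] 0 := by
        filter_upwards [hz] with a haz
        have : sfun β 1 a * pinf a = 0 := haz
        have hs := sfun_pos hβ hc hρ hβ0 hc0 hρ0 1 a
        have := mul_eq_zero.mp this
        rcases this with h' | h'
        · exact absurd h' (ne_of_gt hs)
        · exact h'
      have : (∫ a in Ioi (0:ℝ), pinf a) = 0 := by
        rw [integral_congr_ae hpz]; simp
      rw [hp_one] at this; norm_num at this
  have hF1 : F 1 < 1 := by
    have hle : ∀ a ∈ Ioi (0:ℝ), ifun β c ρ 1 a * pinf a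
        ≤ (1 - sfun β 1 a) * pinf a := by
      intro a ha
      have hr := rfun_nonneg hβ hc hρ hβ0 hc0 hρ0 zero_le_one ha.le (B := 1)
      have : ifun β c ρ 1 a ≤ 1 - sfun β 1 a := by rw [ifun]; linarith
      exact mul_le_mul_of_nonneg_right this (hp0 a ha)
    have hueq : (fun a => (1 - sfun β 1 a) * pinf a)
        = fun a => pinf a - sfun β 1 a * pinf a := by funext a; ring
    have hu_int : Integrable (fun a => (1 - sfun β 1 a) * pinf a)
        (volume.restrict (Ioi 0)) := by
      rw [hueq]; exact hp_int.sub hs_int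
    have h1 := setIntegral_mono_on (hFint 1 ⟨zero_le_one, le_refl 1⟩) hu_int
      measurableSet_Ioi hle
    have h2 : (∫ a in Ioi (0:ℝ), (1 - sfun β 1 a) * pinf a)
        = 1 - ∫ a in Ioi (0:ℝ), sfun β 1 a * pinf a := by
      rw [hueq, integral_sub hp_int hs_int, hp_one]
    calc F 1 ≤ ∫ a in Ioi (0:ℝ), (1 - sfun β 1 a) * pinf a := h1
      _ = 1 - ∫ a in Ioi (0:ℝ), sfun β 1 a * pinf a := h2
      _ < 1 := by linarith
  -- limit of F B / B
  have hTend : Filter.Tendsto (fun B => F B / B) (nhdsWithin 0 (Ioi 0))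
      (nhds (∫ a in Ioi (0:ℝ), ifun0 β c a * pinf a)) := by
    have heq : ∀ B : ℝ, F B / B = ∫ a in Ioi (0:ℝ), ifun β c ρ B a / B * pinf a := by
      intro B
      rw [← MeasureTheory.integral_div]
      simp only [mul_div_right_comm]
    simp only [heq]
    refine MeasureTheory.tendsto_integral_filter_of_dominated_convergence
      (fun a => pinf a * K β a) ?_ ?_ hβ_int ?_
    · refine Filter.Eventually.of_forall fun B => ?_
      exact (Continuous.aestronglyMeasurable
        ((ifun_cont_a hβ hc hρ B).div_const B)).mul hp_int.1
    · have hmem : Ioc (0:ℝ) 1 ∈ nhdsWithin (0:ℝ) (Ioi 0) :=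
        Ioc_mem_nhdsGT_of_mem ⟨le_refl 0, zero_lt_one⟩
      refine Filter.eventually_iff_exists_mem.mpr ⟨Ioc 0 1, hmem, fun B hB => ?_⟩
      rw [ae_restrict_iff' measurableSet_Ioi]
      refine Filter.Eventually.of_forall fun a ha => ?_
      have ha0 : (0:ℝ) ≤ a := le_of_lt ha
      have h1 : |ifun β c ρ B a| ≤ B * K β a :=
        ifun_abs_le hβ hc hρ hβ0 hc0 hρ0 hB.1.le ha0
      have hK : 0 ≤ K β a := K_nonneg hβ hc hρ hβ0 hc0 hρ0 ha0
      have hp : 0 ≤ pinf a := hp0 a ha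
      rw [Real.norm_eq_abs, abs_mul, abs_div, abs_of_nonneg hp,
        abs_of_nonneg hB.1.le]
      have h2 : |ifun β c ρ B a| / B ≤ K β a := by
        rw [div_le_iff₀ hB.1]; nlinarith
      nlinarith [mul_le_mul_of_nonneg_right h2 hp, div_nonneg (abs_nonneg (ifun β c ρ B a)) hB.1.le]
    · rw [ae_restrict_iff' measurableSet_Ioi]
      refine Filter.Eventually.of_forall fun a ha => ?_
      exact (ifun_div_tendsto hβ hc hρ hβ0 hc0 hρ0 ha.le).mul_const (pinf a)
  -- find B₀ with B₀ < F B₀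
  have hev : ∀ᶠ B in nhdsWithin (0:ℝ) (Ioi 0), 1 < F B / B :=
    hTend.eventually (eventually_gt_nhds hR0)
  have hev2 : ∀ᶠ B in nhdsWithin (0:ℝ) (Ioi 0), B ∈ Ioo (0:ℝ) 1 :=
    Ioo_mem_nhdsGT_of_mem ⟨le_refl 0, zero_lt_one⟩
  obtain ⟨B₀, hgt, hB₀mem⟩ := (hev.and hev2).exists
  have hB₀F : B₀ < F B₀ := by
    have := (one_lt_div hB₀mem.1).mp hgt
    linarith
  -- IVT
  have hGcont : ContinuousOn (fun B => F B - B) (Icc B₀ 1) :=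
    (hFcont.mono (Icc_subset_Icc hB₀mem.1.le (le_refl 1))).sub continuousOn_id
  have h0mem : (0:ℝ) ∈ Ioo (F 1 - 1) (F B₀ - B₀) := ⟨by linarith, by linarith⟩
  obtain ⟨B, hBmem, hGB⟩ := intermediate_value_Ioo' hB₀mem.2.le hGcont h0mem
  refine ⟨B, ⟨lt_trans hB₀mem.1 hBmem.1, hBmem.2⟩, ?_⟩
  have : F B - B = 0 := hGB
  rw [hFdef] at this
  linarith [this]

end EndemicAux

open EndemicAux

/-- Existence of an endemic non-uniform steady state for the normalized
age-structured model when the basic reproductive number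
`R₀ = ∫₀^∞ ∫₀^a p∞(a) β(τ) exp(−∫_τ^a (φ(k)+γ(k)) dk) dτ da` exceeds `1`: there
exist `B ∈ (0,1)` and continuously differentiable profiles `s*, i*, r*` on `[0,∞)`
solving the steady-state system with the fixed-point condition
`B = ∫₀^∞ i*(a) p∞(a) da`. -/
theorem endemic_steady_state_exists
    (β φ γ ρ pinf : ℝ → ℝ)
    (hβc : ContinuousOn β (Ici 0)) (hφc : ContinuousOn φ (Ici 0))
    (hγc : ContinuousOn γ (Ici 0)) (hρc : ContinuousOn ρ (Ici 0))
    (hβ0 : ∀ a ∈ Ici (0:ℝ), 0 ≤ β a) (hφ0 : ∀ a ∈ Ici (0:ℝ), 0 ≤ φ a)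
    (hγ0 : ∀ a ∈ Ici (0:ℝ), 0 ≤ γ a) (hρ0 : ∀ a ∈ Ici (0:ℝ), 0 ≤ ρ a)
    (hp0 : ∀ a ∈ Ici (0:ℝ), 0 ≤ pinf a)
    (hp_int : IntegrableOn pinf (Ioi 0))
    (hp_one : ∫ a in Ioi (0:ℝ), pinf a = 1)
    (hβ_int : IntegrableOn (fun a => pinf a * ∫ h in (0:ℝ)..a, β h) (Ioi 0))
    (hR0 : 1 < ∫ a in Ioi (0:ℝ), ∫ τ in (0:ℝ)..a,
        pinf a * β τ * Real.exp (-(∫ k in τ..a, (φ k + γ k)))) :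
    ∃ B ∈ Ioo (0:ℝ) 1, ∃ sStar iStar rStar : ℝ → ℝ,
      sStar 0 = 1 ∧ iStar 0 = 0 ∧ rStar 0 = 0 ∧
      (∀ a ∈ Ici (0:ℝ),
          HasDerivWithinAt sStar (-(B * β a * sStar a)) (Ici 0) a) ∧
      (∀ a ∈ Ici (0:ℝ),
          HasDerivWithinAt iStar
            (B * β a * sStar a - (φ a + γ a) * iStar a + B * ρ a * rStar a)
            (Ici 0) a) ∧
      (∀ a ∈ Ici (0:ℝ),
          HasDerivWithinAt rStar
            ((φ a + γ a) * iStar a - B * ρ a * rStar a) (Ici 0) a) ∧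
      B = ∫ a in Ioi (0:ℝ), iStar a * pinf a := by
  have hmcont : Continuous fun a : ℝ => max a 0 := continuous_id.max continuous_const
  have hmmem : ∀ x : ℝ, max x 0 ∈ Ici (0:ℝ) := fun x => le_max_right x 0
  set β' : ℝ → ℝ := fun a => β (max a 0) with hβ'def
  set ρ' : ℝ → ℝ := fun a => ρ (max a 0) with hρ'def
  set c : ℝ → ℝ := fun a => φ (max a 0) + γ (max a 0) with hcdef
  have hβ' : Continuous β' := hβc.comp_continuous hmcont hmmem
  have hρ' : Continuous ρ' := hρc.comp_continuous hmcont hmmem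
  have hc : Continuous c :=
    (hφc.comp_continuous hmcont hmmem).add (hγc.comp_continuous hmcont hmmem)
  have hβ0' : ∀ x, 0 ≤ β' x := fun x => hβ0 _ (hmmem x)
  have hρ0' : ∀ x, 0 ≤ ρ' x := fun x => hρ0 _ (hmmem x)
  have hc0 : ∀ x, 0 ≤ c x := fun x => add_nonneg (hφ0 _ (hmmem x)) (hγ0 _ (hmmem x))
  have hp0' : ∀ a ∈ Ioi (0:ℝ), 0 ≤ pinf a := fun a ha => hp0 a (mem_Ici.mpr (mem_Ioi.mp ha).le)
  -- transfer hβ_int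
  have hKeq : ∀ a ∈ Ioi (0:ℝ), pinf a * (∫ h in (0:ℝ)..a, β h) = pinf a * K β' a := by
    intro a ha
    congr 1
    refine intervalIntegral.integral_congr fun h hh => ?_
    rw [uIcc_of_le (le_of_lt ha)] at hh
    simp only [hβ'def, max_eq_left hh.1]
  have hβ_int' : IntegrableOn (fun a => pinf a * K β' a) (Ioi 0) :=
    hβ_int.congr_fun hKeq measurableSet_Ioi
  -- transfer hR0
  have hR0' : 1 < ∫ a in Ioi (0:ℝ), ifun0 β' c a * pinf a := by
    have hptwise : ∀ a ∈ Ioi (0:ℝ),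
        (∫ τ in (0:ℝ)..a, pinf a * β τ * Real.exp (-(∫ k in τ..a, (φ k + γ k))))
          = ifun0 β' c a * pinf a := by
      intro a ha
      have ha0 : (0:ℝ) ≤ a := le_of_lt ha
      have hstep : ∀ τ ∈ uIcc (0:ℝ) a,
          pinf a * β τ * Real.exp (-(∫ k in τ..a, (φ k + γ k)))
            = (pinf a * Real.exp (-(E c a))) * (β' τ * Real.exp (E c τ)) := by
        intro τ hτ
        rw [uIcc_of_le ha0] at hτ
        have hβeq : β τ = β' τ := by simp only [hβ'def, max_eq_left hτ.1]
        have hinner : (∫ k in τ..a, (φ k + γ k)) = ∫ k in τ..a, c k := by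
          refine intervalIntegral.integral_congr fun k hk => ?_
          rw [uIcc_of_le hτ.2] at hk
          have hk0 : (0:ℝ) ≤ k := le_trans hτ.1 hk.1
          simp only [hcdef, max_eq_left hk0]
        have hEsub : (∫ k in τ..a, c k) = E c a - E c τ := by
          have := intervalIntegral.integral_add_adjacent_intervals
            (hc.intervalIntegrable 0 τ) (hc.intervalIntegrable τ a) (μ := volume)
          have hE : E c τ + ∫ k in τ..a, c k = E c a := this
          linarith
        rw [hβeq, hinner, hEsub, show -(E c a - E c τ) = -(E c a) + E c τ by ring,
          Real.exp_add]
        ring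
      rw [intervalIntegral.integral_congr hstep, intervalIntegral.integral_const_mul,
        mul_assoc, ibp hβ' hc hρ' a, mul_comm]
    rwa [setIntegral_congr_fun measurableSet_Ioi hptwise] at hR0
  obtain ⟨B, hBmem, hBfix⟩ := exists_fixed_point hβ' hc hρ' hβ0' hc0 hρ0'
    hp0' hp_int hp_one hβ_int' hR0'
  refine ⟨B, hBmem, sfun β' B, ifun β' c ρ' B, rfun β' c ρ' B,
    sfun_zero hβ' hc hρ' B, ifun_zero hβ' hc hρ' B, rfun_zero hβ' hc hρ' B,
    ?_, ?_, ?_, hBfix⟩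
  · intro a ha
    have hd := sfun_deriv hβ' hc hρ' B a
    simp only [hβ'def, max_eq_left (mem_Ici.mp ha)] at hd ⊢
    exact hd.hasDerivWithinAt
  · intro a ha
    have hd := ifun_deriv hβ' hc hρ' B a
    simp only [hβ'def, hcdef, hρ'def, max_eq_left (mem_Ici.mp ha)] at hd ⊢
    exact hd.hasDerivWithinAt
  · intro a ha
    have hd := rfun_deriv hβ' hc hρ' B a
    simp only [hcdef, hρ'def, max_eq_left (mem_Ici.mp ha)] at hd ⊢
    exact hd.hasDerivWithinAt
end

section
/- Let μ, β, φ, γ, ρ be positive real constants and let B ∈ (0,1] be such that φ+γ+B(ρ−β) ≠ 0. Define i_B : [0,∞) → ℝ by i_B(a) = Bρ/(φ+γ+Bρ) − [B(ρ−β)/(φ+γ+B(ρ−β))]·e^{−Bβa} − [Bβ(φ+γ)/((φ+γ+Bρ)(φ+γ+B(ρ−β)))]·e^{−(φ+γ+Bρ)a}. Then μ ∫₀^∞ i_B(a) e^{−μa} da = B · (B + μ/ρ) / ((B + μ/β)(B + (μ+φ+γ)/ρ)). -/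
open Set MeasureTheory

/-- The explicit infected-class steady-state profile `i_B` in the
constant-coefficient case of the age-structured model. -/
noncomputable def iProfile (β φ γ ρ B a : ℝ) : ℝ :=
  B * ρ / (φ + γ + B * ρ)
    - B * (ρ - β) / (φ + γ + B * (ρ - β)) * Real.exp (-(B * β * a))
    - B * β * (φ + γ) / ((φ + γ + B * ρ) * (φ + γ + B * (ρ - β)))
        * Real.exp (-((φ + γ + B * ρ) * a))

lemma exp_int (c : ℝ) (hc : 0 < c) : ∫ a in Ioi (0:ℝ), Real.exp (-(c * a)) = 1 / c := by
  have := integral_comp_mul_left_Ioi (fun x => Real.exp (-x)) 0 hc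
  simp only [mul_zero, integral_exp_neg_Ioi_zero, smul_eq_mul, mul_one] at this
  rw [this, one_div]

lemma exp_intg (c : ℝ) (hc : 0 < c) : IntegrableOn (fun a => Real.exp (-(c * a))) (Ioi (0:ℝ)) := by
  simpa [mul_comm] using exp_neg_integrableOn_Ioi 0 hc

/-- With `p∞(a) = μ e^{−μa}`, the fixed-point map satisfies
`H(B) = μ ∫₀^∞ i_B(a) e^{−μa} da = B (B + μ/ρ)/((B + μ/β)(B + (μ+φ+γ)/ρ))`,
that is, `Ĝ(B) = H(B)/B` has the explicit closed form of the paper. -/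
theorem fixed_point_map_explicit_formula
    (μ β φ γ ρ B : ℝ) (hμ : 0 < μ) (hβ : 0 < β) (hφ : 0 < φ) (hγ : 0 < γ) (hρ : 0 < ρ)
    (hB : B ∈ Ioc (0:ℝ) 1) (hne : φ + γ + B * (ρ - β) ≠ 0) :
    μ * ∫ a in Ioi (0:ℝ), iProfile β φ γ ρ B a * Real.exp (-(μ * a)) =
      B * ((B + μ / ρ) / ((B + μ / β) * (B + (μ + φ + γ) / ρ))) := by
  obtain ⟨hB0, hB1⟩ := hB
  set C1 := B * ρ / (φ + γ + B * ρ)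
  set C2 := B * (ρ - β) / (φ + γ + B * (ρ - β))
  set C3 := B * β * (φ + γ) / ((φ + γ + B * ρ) * (φ + γ + B * (ρ - β)))
  have h1 : (0:ℝ) < B * β + μ := by positivity
  have h2 : (0:ℝ) < φ + γ + B * ρ + μ := by positivity
  have hfun : ∀ a : ℝ, iProfile β φ γ ρ B a * Real.exp (-(μ * a)) =
      C1 * Real.exp (-(μ * a)) - C2 * Real.exp (-((B * β + μ) * a))
        - C3 * Real.exp (-((φ + γ + B * ρ + μ) * a)) := by
    intro a
    have e1 : Real.exp (-(B * β * a)) * Real.exp (-(μ * a)) = Real.exp (-((B * β + μ) * a)) := by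
      rw [← Real.exp_add]; ring_nf
    have e2 : Real.exp (-((φ + γ + B * ρ) * a)) * Real.exp (-(μ * a)) =
        Real.exp (-((φ + γ + B * ρ + μ) * a)) := by
      rw [← Real.exp_add]; ring_nf
    simp only [iProfile]
    rw [← e1, ← e2]; ring
  simp only [hfun]
  have i1 := (exp_intg μ hμ).const_mul C1
  have i2 := (exp_intg _ h1).const_mul C2
  have i3 := (exp_intg _ h2).const_mul C3
  have e3 := integral_sub (i1.sub i2) i3
  have e2' := integral_sub i1 i2
  simp only [Pi.sub_apply] at e3
  rw [e3, e2',
    integral_const_mul, integral_const_mul, integral_const_mul,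
    exp_int μ hμ, exp_int _ h1, exp_int _ h2]
  have hd1 : (0:ℝ) < φ + γ + B * ρ := by positivity
  simp only [C1, C2, C3]
  field_simp
  ring
end

section
/- Let β, φ, γ, ρ ≥ 0 be real constants and B > 0 a real number with φ+γ+B(ρ−β) ≠ 0 and φ+γ+Bρ ≠ 0. Define s_B(a) = e^{−Bβa}, i_B(a) = Bρ/(φ+γ+Bρ) − [B(ρ−β)/(φ+γ+B(ρ−β))]·e^{−Bβa} − [Bβ(φ+γ)/((φ+γ+Bρ)(φ+γ+B(ρ−β)))]·e^{−(φ+γ+Bρ)a}, and r_B(a) = (φ+γ)/(φ+γ+Bρ) − [(φ+γ)/(φ+γ+B(ρ−β))]·e^{−Bβa} + [Bβ(φ+γ)/((φ+γ+Bρ)(φ+γ+B(ρ−β)))]·e^{−(φ+γ+Bρ)a}. Then for all a ≥ 0: s_B'(a) = −Bβ s_B(a), i_B'(a) = Bβ s_B(a) − (φ+γ) i_B(a) + Bρ r_B(a), r_B'(a) = (φ+γ) i_B(a) − Bρ r_B(a), with s_B(0) = 1, i_B(0) = 0, r_B(0) = 0. -/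
open Set

/-- Susceptible steady-state profile in the constant-coefficient case. -/
noncomputable def sProf (β B a : ℝ) : ℝ := Real.exp (-(B * β * a))

/-- Infected steady-state profile in the constant-coefficient case. -/
noncomputable def iProf (β φ γ ρ B a : ℝ) : ℝ :=
  B * ρ / (φ + γ + B * ρ)
    - B * (ρ - β) / (φ + γ + B * (ρ - β)) * Real.exp (-(B * β * a))
    - B * β * (φ + γ) / ((φ + γ + B * ρ) * (φ + γ + B * (ρ - β)))
        * Real.exp (-((φ + γ + B * ρ) * a))

/-- Temporarily-recovered steady-state profile in the constant-coefficient case. -/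
noncomputable def rProf (β φ γ ρ B a : ℝ) : ℝ :=
  (φ + γ) / (φ + γ + B * ρ)
    - (φ + γ) / (φ + γ + B * (ρ - β)) * Real.exp (-(B * β * a))
    + B * β * (φ + γ) / ((φ + γ + B * ρ) * (φ + γ + B * (ρ - β)))
        * Real.exp (-((φ + γ + B * ρ) * a))

lemma expDeriv (c a : ℝ) : HasDerivAt (fun x : ℝ => Real.exp (-(c * x)))
    (-c * Real.exp (-(c * a))) a := by
  have h : HasDerivAt (fun x : ℝ => -(c * x)) (-c) a := by
    exact (by simpa using (hasDerivAt_id a).const_mul c : HasDerivAt (fun x : ℝ => c * x) c a).neg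
  simpa [mul_comm] using h.exp


/-- The explicit constant-coefficient profiles `s_B, i_B, r_B` solve the steady-state
system `s' = −Bβs`, `i' = Bβs − (φ+γ)i + Bρr`, `r' = (φ+γ)i − Bρr` on `[0,∞)` with
`s_B(0) = 1`, `i_B(0) = 0`, `r_B(0) = 0`. -/
theorem constant_coefficient_steady_state_profiles
    (β φ γ ρ B : ℝ) (hβ : 0 ≤ β) (hφ : 0 ≤ φ) (hγ : 0 ≤ γ) (hρ : 0 ≤ ρ) (hB : 0 < B)
    (hne : φ + γ + B * (ρ - β) ≠ 0) (hne' : φ + γ + B * ρ ≠ 0) :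
    (∀ a ∈ Ici (0:ℝ),
        HasDerivAt (fun x => sProf β B x) (-(B * β * sProf β B a)) a) ∧
    (∀ a ∈ Ici (0:ℝ),
        HasDerivAt (fun x => iProf β φ γ ρ B x)
          (B * β * sProf β B a - (φ + γ) * iProf β φ γ ρ B a
            + B * ρ * rProf β φ γ ρ B a) a) ∧
    (∀ a ∈ Ici (0:ℝ),
        HasDerivAt (fun x => rProf β φ γ ρ B x)
          ((φ + γ) * iProf β φ γ ρ B a - B * ρ * rProf β φ γ ρ B a) a) ∧
    sProf β B 0 = 1 ∧ iProf β φ γ ρ B 0 = 0 ∧ rProf β φ γ ρ B 0 = 0 := by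

  have hs : ∀ a : ℝ, HasDerivAt (fun x => sProf β B x) (-(B * β * sProf β B a)) a := by
    intro a
    simpa [sProf] using expDeriv (B * β) a
  have hi : ∀ a : ℝ, HasDerivAt (fun x => iProf β φ γ ρ B x)
      (B * β * sProf β B a - (φ + γ) * iProf β φ γ ρ B a + B * ρ * rProf β φ γ ρ B a) a := by
    intro a
    have h1 := (expDeriv (B * β) a).const_mul (B * (ρ - β) / (φ + γ + B * (ρ - β)))
    have h2 := (expDeriv (φ + γ + B * ρ) a).const_mul
      (B * β * (φ + γ) / ((φ + γ + B * ρ) * (φ + γ + B * (ρ - β))))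
    have h := ((hasDerivAt_const a (B * ρ / (φ + γ + B * ρ))).sub h1).sub h2
    have heq : (fun x => iProf β φ γ ρ B x) = fun x =>
        B * ρ / (φ + γ + B * ρ)
          - B * (ρ - β) / (φ + γ + B * (ρ - β)) * Real.exp (-(B * β * x))
          - B * β * (φ + γ) / ((φ + γ + B * ρ) * (φ + γ + B * (ρ - β)))
              * Real.exp (-((φ + γ + B * ρ) * x)) := by
      funext x; simp [iProf]
    rw [heq]
    refine h.congr_deriv ?_
    simp only [sProf, iProf, rProf]
    field_simp
    ring
  have hr : ∀ a : ℝ, HasDerivAt (fun x => rProf β φ γ ρ B x)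
      ((φ + γ) * iProf β φ γ ρ B a - B * ρ * rProf β φ γ ρ B a) a := by
    intro a
    have h1 := (expDeriv (B * β) a).const_mul ((φ + γ) / (φ + γ + B * (ρ - β)))
    have h2 := (expDeriv (φ + γ + B * ρ) a).const_mul
      (B * β * (φ + γ) / ((φ + γ + B * ρ) * (φ + γ + B * (ρ - β))))
    have h := ((hasDerivAt_const a ((φ + γ) / (φ + γ + B * ρ))).sub h1).add h2
    have heq : (fun x => rProf β φ γ ρ B x) = fun x =>
        (φ + γ) / (φ + γ + B * ρ)
          - (φ + γ) / (φ + γ + B * (ρ - β)) * Real.exp (-(B * β * x))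
          + B * β * (φ + γ) / ((φ + γ + B * ρ) * (φ + γ + B * (ρ - β)))
              * Real.exp (-((φ + γ + B * ρ) * x)) := by
      funext x; simp [rProf]
    rw [heq]
    refine h.congr_deriv ?_
    simp only [iProf, rProf]
    field_simp
    ring
  refine ⟨fun a _ => hs a, fun a _ => hi a, fun a _ => hr a, ?_, ?_, ?_⟩
  · simp [sProf]
  · simp [iProf]; field_simp; ring
  · simp [rProf]; field_simp; ring
end

section
/- Let β, φ, γ, ρ : [0,∞) → ℝ be continuous and B ≥ 0 a real number. Define s_B(a) = exp(−B ∫₀^a β(h) dh), r_B(a) = ∫₀^a (φ(τ)+γ(τ))(1 − s_B(τ)) exp(−∫_τ^a (φ(h)+γ(h)+Bρ(h)) dh) dτ, and i_B(a) = 1 − s_B(a) − r_B(a). Then for all a ≥ 0: s_B'(a) = −B β(a) s_B(a), i_B'(a) = B β(a) s_B(a) − (φ(a)+γ(a)) i_B(a) + B ρ(a) r_B(a), r_B'(a) = (φ(a)+γ(a)) i_B(a) − B ρ(a) r_B(a), with s_B(0) = 1, i_B(0) = 0, r_B(0) = 0. -/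
open Set MeasureTheory

/-- Susceptible steady-state profile `s_B(a) = exp(−B ∫₀^a β(h) dh)` for
age-dependent transmission rate `β` and force-of-infection parameter `B`. -/
noncomputable def sSt (β : ℝ → ℝ) (B a : ℝ) : ℝ :=
  Real.exp (-(B * ∫ h in (0:ℝ)..a, β h))

/-- Temporarily-recovered steady-state profile
`r_B(a) = ∫₀^a (φ(τ)+γ(τ))(1 − s_B(τ)) exp(−∫_τ^a (φ+γ+Bρ)) dτ`. -/
noncomputable def rSt (β φ γ ρ : ℝ → ℝ) (B a : ℝ) : ℝ :=
  ∫ τ in (0:ℝ)..a, (φ τ + γ τ) * (1 - sSt β B τ)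
      * Real.exp (-(∫ h in τ..a, (φ h + γ h + B * ρ h)))

/-- Infected steady-state profile `i_B(a) = 1 − s_B(a) − r_B(a)`. -/
noncomputable def iSt (β φ γ ρ : ℝ → ℝ) (B a : ℝ) : ℝ :=
  1 - sSt β B a - rSt β φ γ ρ B a

/-- FTC for a continuous integrand, primitive based at `0`. -/
lemma ftc_aux {u : ℝ → ℝ} (hu : Continuous u) (a : ℝ) :
    HasDerivAt (fun x => ∫ t in (0:ℝ)..x, u t) (u a) a :=
  intervalIntegral.integral_hasDerivAt_right (hu.intervalIntegrable 0 a)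
    (hu.stronglyMeasurableAtFilter _ _) hu.continuousAt

/-- Global version of the steady-state system for continuous total coefficients. -/
lemma steady_global (β φ γ ρ : ℝ → ℝ) (B : ℝ)
    (hβ : Continuous β) (hφ : Continuous φ) (hγ : Continuous γ) (hρ : Continuous ρ) :
    (∀ a : ℝ, HasDerivAt (fun x => sSt β B x) (-(B * β a * sSt β B a)) a) ∧
    (∀ a : ℝ, HasDerivAt (fun x => rSt β φ γ ρ B x)
        ((φ a + γ a) * iSt β φ γ ρ B a - B * ρ a * rSt β φ γ ρ B a) a) := by
  set g : ℝ → ℝ := fun h => φ h + γ h + B * ρ h with hg_def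
  have hg : Continuous g := by continuity
  set Iβ : ℝ → ℝ := fun x => ∫ t in (0:ℝ)..x, β t with hIβ_def
  set Ig : ℝ → ℝ := fun x => ∫ t in (0:ℝ)..x, g t with hIg_def
  have hIβd : ∀ a, HasDerivAt Iβ (β a) a := ftc_aux hβ
  have hIgd : ∀ a, HasDerivAt Ig (g a) a := ftc_aux hg
  have hIβc : Continuous Iβ := by
    apply continuous_iff_continuousAt.2; intro a; exact (hIβd a).continuousAt
  have hIgc : Continuous Ig := by
    apply continuous_iff_continuousAt.2; intro a; exact (hIgd a).continuousAt
  have hs_eq : ∀ x, sSt β B x = Real.exp (-(B * Iβ x)) := fun x => rfl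
  have hsd : ∀ a, HasDerivAt (fun x => sSt β B x) (-(B * β a * sSt β B a)) a := by
    intro a
    have h := (((hIβd a).const_mul B).neg).exp
    refine h.congr_deriv (Eq.symm ?_)
    simp only [hs_eq, Pi.neg_apply]; ring
  have hsc : Continuous (fun x => sSt β B x) := by
    apply continuous_iff_continuousAt.2; intro a; exact (hsd a).continuousAt
  set f : ℝ → ℝ := fun τ => (φ τ + γ τ) * (1 - sSt β B τ) with hf_def
  have hfc : Continuous f := by
    apply Continuous.mul (by continuity)
    exact continuous_const.sub hsc
  set E : ℝ → ℝ := fun x => Real.exp (-(Ig x)) with hE_def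
  set F : ℝ → ℝ := fun x => ∫ τ in (0:ℝ)..x, f τ * Real.exp (Ig τ) with hF_def
  have hFd : ∀ a, HasDerivAt F (f a * Real.exp (Ig a)) a :=
    ftc_aux (hfc.mul (hIgc.rexp))
  have hEd : ∀ a, HasDerivAt E (Real.exp (-(Ig a)) * -(g a)) a := fun a => ((hIgd a).neg).exp
  have key : ∀ a, rSt β φ γ ρ B a = E a * F a := by
    intro a
    have h1 : ∀ τ : ℝ, Real.exp (-(∫ h in τ..a, g h)) = E a * Real.exp (Ig τ) := by
      intro τ
      have : (∫ h in τ..a, g h) = Ig a - Ig τ := by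
        rw [hIg_def]
        exact (intervalIntegral.integral_interval_sub_left
          (hg.intervalIntegrable 0 a) (hg.intervalIntegrable 0 τ)).symm
      rw [this, hE_def, ← Real.exp_add]
      ring_nf
    have h2 : rSt β φ γ ρ B a = ∫ τ in (0:ℝ)..a, E a * (f τ * Real.exp (Ig τ)) := by
      unfold rSt
      apply intervalIntegral.integral_congr
      intro τ _
      have := h1 τ
      simp only [hg_def] at this
      dsimp only
      rw [this]; simp only [hf_def]; ring
    rw [h2, intervalIntegral.integral_const_mul]
  have hrd : ∀ a, HasDerivAt (fun x => rSt β φ γ ρ B x)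
      ((φ a + γ a) * iSt β φ γ ρ B a - B * ρ a * rSt β φ γ ρ B a) a := by
    intro a
    have hfun : (fun x => rSt β φ γ ρ B x) = fun x => E x * F x := funext key
    rw [hfun]
    have h := (hEd a).mul (hFd a)
    refine h.congr_deriv (Eq.symm ?_)
    have hcancel : Real.exp (-(Ig a)) * Real.exp (Ig a) = 1 := by
      rw [← Real.exp_add]; simp
    have hr : rSt β φ γ ρ B a = E a * F a := key a
    simp only [iSt, hr, hE_def, hf_def, hg_def] at *
    linear_combination (-(φ a + γ a) * (1 - sSt β B a)) * hcancel
  exact ⟨hsd, hrd⟩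

/-- For continuous age-dependent coefficients, the explicit profiles `s_B, i_B, r_B`
solve the parametrized linear steady-state system `s' = −Bβ(a)s`,
`i' = Bβ(a)s − (φ(a)+γ(a))i + Bρ(a)r`, `r' = (φ(a)+γ(a))i − Bρ(a)r` on `[0,∞)`,
with `s_B(0) = 1`, `i_B(0) = 0`, `r_B(0) = 0`. -/
theorem steady_state_explicit_solution_age_dependent
    (β φ γ ρ : ℝ → ℝ) (B : ℝ) (hB : 0 ≤ B)
    (hβ : ContinuousOn β (Ici 0)) (hφ : ContinuousOn φ (Ici 0))
    (hγ : ContinuousOn γ (Ici 0)) (hρ : ContinuousOn ρ (Ici 0)) :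
    (∀ a ∈ Ici (0:ℝ),
        HasDerivWithinAt (fun x => sSt β B x) (-(B * β a * sSt β B a)) (Ici 0) a) ∧
    (∀ a ∈ Ici (0:ℝ),
        HasDerivWithinAt (fun x => iSt β φ γ ρ B x)
          (B * β a * sSt β B a - (φ a + γ a) * iSt β φ γ ρ B a
            + B * ρ a * rSt β φ γ ρ B a) (Ici 0) a) ∧
    (∀ a ∈ Ici (0:ℝ),
        HasDerivWithinAt (fun x => rSt β φ γ ρ B x)
          ((φ a + γ a) * iSt β φ γ ρ B a - B * ρ a * rSt β φ γ ρ B a) (Ici 0) a) ∧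
    sSt β B 0 = 1 ∧ iSt β φ γ ρ B 0 = 0 ∧ rSt β φ γ ρ B 0 = 0 := by
  -- extend the coefficients continuously to all of ℝ
  have hmax : Continuous (fun x : ℝ => max x 0) := continuous_id.max continuous_const
  have hmem : ∀ x : ℝ, max x 0 ∈ Ici (0:ℝ) := fun x => le_max_right x 0
  set β' : ℝ → ℝ := fun x => β (max x 0) with hβ'_def
  set φ' : ℝ → ℝ := fun x => φ (max x 0) with hφ'_def
  set γ' : ℝ → ℝ := fun x => γ (max x 0) with hγ'_def
  set ρ' : ℝ → ℝ := fun x => ρ (max x 0) with hρ'_def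
  have hβ' : Continuous β' := hβ.comp_continuous hmax hmem
  have hφ' : Continuous φ' := hφ.comp_continuous hmax hmem
  have hγ' : Continuous γ' := hγ.comp_continuous hmax hmem
  have hρ' : Continuous ρ' := hρ.comp_continuous hmax hmem
  have hβagree : ∀ x : ℝ, 0 ≤ x → β' x = β x := fun x hx => by
    simp [hβ'_def, max_eq_left hx]
  have hφagree : ∀ x : ℝ, 0 ≤ x → φ' x = φ x := fun x hx => by
    simp [hφ'_def, max_eq_left hx]
  have hγagree : ∀ x : ℝ, 0 ≤ x → γ' x = γ x := fun x hx => by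
    simp [hγ'_def, max_eq_left hx]
  have hρagree : ∀ x : ℝ, 0 ≤ x → ρ' x = ρ x := fun x hx => by
    simp [hρ'_def, max_eq_left hx]
  -- the profiles agree on `Ici 0`
  have hs_agree : ∀ x : ℝ, 0 ≤ x → sSt β' B x = sSt β B x := by
    intro x hx
    unfold sSt
    have : (∫ h in (0:ℝ)..x, β' h) = ∫ h in (0:ℝ)..x, β h := by
      apply intervalIntegral.integral_congr
      intro t ht
      rw [uIcc_of_le hx] at ht
      exact hβagree t ht.1
    rw [this]
  have hr_agree : ∀ x : ℝ, 0 ≤ x → rSt β' φ' γ' ρ' B x = rSt β φ γ ρ B x := by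
    intro x hx
    unfold rSt
    apply intervalIntegral.integral_congr
    intro τ hτ
    rw [uIcc_of_le hx] at hτ
    dsimp only
    rw [hφagree τ hτ.1, hγagree τ hτ.1, hs_agree τ hτ.1]
    congr 3
    apply intervalIntegral.integral_congr
    intro t ht
    dsimp only
    rcases le_total τ x with h | h
    · rw [uIcc_of_le h] at ht
      have ht0 : 0 ≤ t := le_trans hτ.1 ht.1
      rw [hφagree t ht0, hγagree t ht0, hρagree t ht0]
    · rw [uIcc_of_ge h] at ht
      have ht0 : 0 ≤ t := le_trans hx ht.1
      rw [hφagree t ht0, hγagree t ht0, hρagree t ht0]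
  have hi_agree : ∀ x : ℝ, 0 ≤ x → iSt β' φ' γ' ρ' B x = iSt β φ γ ρ B x := by
    intro x hx; unfold iSt; rw [hs_agree x hx, hr_agree x hx]
  obtain ⟨hsd, hrd⟩ := steady_global β' φ' γ' ρ' B hβ' hφ' hγ' hρ'
  have hid : ∀ a : ℝ, HasDerivAt (fun x => iSt β' φ' γ' ρ' B x)
      (B * β' a * sSt β' B a - (φ' a + γ' a) * iSt β' φ' γ' ρ' B a
        + B * ρ' a * rSt β' φ' γ' ρ' B a) a := by
    intro a
    have h := ((hasDerivAt_const a (1:ℝ)).sub (hsd a)).sub (hrd a)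
    have hfun : (fun x => iSt β' φ' γ' ρ' B x)
        = fun x => 1 - sSt β' B x - rSt β' φ' γ' ρ' B x := funext fun x => rfl
    rw [hfun]
    refine h.congr_deriv (Eq.symm ?_)
    simp only [iSt]; ring
  refine ⟨?_, ?_, ?_, ?_, ?_, ?_⟩
  · intro a ha
    have h := ((hsd a).hasDerivWithinAt (s := Ici 0)).congr
      (fun y hy => (hs_agree y hy).symm) (hs_agree a ha).symm
    rw [hβagree a ha, hs_agree a ha] at h
    exact h
  · intro a ha
    have h := ((hid a).hasDerivWithinAt (s := Ici 0)).congr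
      (fun y hy => (hi_agree y hy).symm) (hi_agree a ha).symm
    rw [hβagree a ha, hφagree a ha, hγagree a ha, hρagree a ha,
      hs_agree a ha, hr_agree a ha, hi_agree a ha] at h
    exact h
  · intro a ha
    have h := ((hrd a).hasDerivWithinAt (s := Ici 0)).congr
      (fun y hy => (hr_agree y hy).symm) (hr_agree a ha).symm
    rw [hφagree a ha, hγagree a ha, hρagree a ha,
      hr_agree a ha, hi_agree a ha] at h
    exact h
  · simp [sSt]
  · simp [iSt, sSt, rSt]
  · simp [rSt]
end

section
/- Let β, φ, γ, ρ : [0,∞) → ℝ be continuous and nonnegative, and let p∞ : [0,∞) → ℝ be a nonnegative integrable function with ∫₀^∞ p∞(a) da = 1 and ∫₀^∞ p∞(a) (∫₀^a β(h) dh) da < ∞. For B > 0 define s_B(a) = exp(−B ∫₀^a β(h) dh), r_B(a) = ∫₀^a (φ(τ)+γ(τ))(1 − s_B(τ)) exp(−∫_τ^a (φ(h)+γ(h)+Bρ(h)) dh) dτ, i_B(a) = 1 − s_B(a) − r_B(a), and Ĝ(B) = (1/B) ∫₀^∞ i_B(a) p∞(a) da. Then lim_{B→0⁺} Ĝ(B)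 = ∫₀^∞ ∫₀^a p∞(a) β(τ) exp(−∫_τ^a (φ(h)+γ(h)) dh) dτ da = R₀. -/
open Set MeasureTheory Filter Topology

namespace GhatAux

noncomputable def prim (f : ℝ → ℝ) (x : ℝ) : ℝ := ∫ t in (0:ℝ)..x, f t

lemma intInt {f : ℝ → ℝ} (hf : ContinuousOn f (Ici 0)) {u v : ℝ} (hu : 0 ≤ u) (hv : 0 ≤ v) :
    IntervalIntegrable f volume u v :=
  (hf.mono fun x hx => le_trans (le_min hu hv) hx.1).intervalIntegrable

lemma prim_hasDerivAt {f : ℝ → ℝ} (hf : ContinuousOn f (Ici 0)) {x : ℝ} (hx : 0 < x) :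
    HasDerivAt (prim f) (f x) x :=
  intervalIntegral.integral_hasDerivAt_right (intInt hf le_rfl hx.le)
    (ContinuousOn.stronglyMeasurableAtFilter isOpen_Ioi (hf.mono Ioi_subset_Ici_self) x hx)
    (hf.continuousAt (Ici_mem_nhds hx))

lemma prim_continuousOn {f : ℝ → ℝ} (hf : ContinuousOn f (Ici 0)) :
    ContinuousOn (prim f) (Ici 0) := by
  intro x hx
  have hx0 : (0:ℝ) ≤ x := hx
  have h1 : IntegrableOn f (uIcc 0 (x+1)) volume := by
    rw [uIcc_of_le (by linarith)]
    exact (intervalIntegrable_iff_integrableOn_Icc_of_le (by linarith)).1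
      (intInt hf le_rfl (by linarith))
  have h2 := intervalIntegral.continuousOn_primitive_interval h1
  rw [uIcc_of_le (by linarith)] at h2
  have h3 : Icc (0:ℝ) (x+1) ∈ 𝓝[Ici 0] x := by
    refine Filter.mem_of_superset
      (inter_mem self_mem_nhdsWithin
        (mem_nhdsWithin_of_mem_nhds (Iic_mem_nhds (show x < x+1 by linarith)))) ?_
    rintro y ⟨hy1, hy2⟩; exact ⟨hy1, hy2⟩
  exact (h2 x ⟨hx0, by linarith⟩).mono_of_mem_nhdsWithin h3

lemma prim_split {f : ℝ → ℝ} (hf : ContinuousOn f (Ici 0)) {τ a : ℝ} (hτ : 0 ≤ τ) (ha : 0 ≤ a) :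
    ∫ h in τ..a, f h = prim f a - prim f τ := by
  rw [← intervalIntegral.integral_interval_sub_left (intInt hf le_rfl ha) (intInt hf le_rfl hτ)]; rfl

lemma prim_nonneg {f : ℝ → ℝ} (hf0 : ∀ x ∈ Ici (0:ℝ), 0 ≤ f x) {a : ℝ} (ha : 0 ≤ a) :
    0 ≤ prim f a :=
  intervalIntegral.integral_nonneg ha fun u hu => hf0 u hu.1

lemma prim_mono {f : ℝ → ℝ} (hf : ContinuousOn f (Ici 0)) (hf0 : ∀ x ∈ Ici (0:ℝ), 0 ≤ f x)
    {τ a : ℝ} (hτ : 0 ≤ τ) (hτa : τ ≤ a) : prim f τ ≤ prim f a := by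
  have h := prim_split hf hτ (hτ.trans hτa)
  have h2 : 0 ≤ ∫ h in τ..a, f h :=
    intervalIntegral.integral_nonneg hτa fun u hu => hf0 u (hτ.trans hu.1)
  linarith

lemma one_sub_exp_le (x : ℝ) : 1 - Real.exp (-x) ≤ x := by
  have := Real.add_one_le_exp (-x); linarith

lemma tendsto_one_sub_exp_div (c : ℝ) :
    Tendsto (fun B => (1 - Real.exp (-(B * c))) / B) (𝓝[>] (0:ℝ)) (𝓝 c) := by
  have hd : HasDerivAt (fun B : ℝ => 1 - Real.exp (-(B * c))) c 0 := by
    have h1 : HasDerivAt (fun B : ℝ => -(B * c)) (-c) 0 := (hasDerivAt_mul_const c).neg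
    have h3 := (h1.exp).const_sub 1
    simpa using h3
  have h4 : Tendsto (slope (fun B : ℝ => 1 - Real.exp (-(B * c))) 0) (𝓝[>] 0) (𝓝 c) :=
    (hasDerivAt_iff_tendsto_slope.1 hd).mono_left (nhdsWithin_mono _ fun x hx => ne_of_gt hx)
  refine h4.congr fun B => ?_
  simp [slope_def_field]

lemma uIcc_sub {a : ℝ} (ha : 0 ≤ a) : uIcc (0:ℝ) a ⊆ Ici 0 := by
  rw [uIcc_of_le ha]; exact Icc_subset_Ici_self

lemma ftc_exp {g : ℝ → ℝ} (hg : ContinuousOn g (Ici 0)) {a : ℝ} (ha : 0 ≤ a) :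
    ∫ τ in (0:ℝ)..a, Real.exp (prim g τ) * g τ = Real.exp (prim g a) - 1 := by
  have hexpc : ContinuousOn (fun τ => Real.exp (prim g τ)) (Ici 0) :=
    Real.continuous_exp.comp_continuousOn (prim_continuousOn hg)
  have hint : IntervalIntegrable (fun τ => Real.exp (prim g τ) * g τ) volume 0 a :=
    ((hexpc.mono (uIcc_sub ha)).mul (hg.mono (uIcc_sub ha))).intervalIntegrable
  have h := intervalIntegral.integral_eq_sub_of_hasDeriv_right_of_le ha
    (hexpc.mono Icc_subset_Ici_self)
    (fun x hx => ((prim_hasDerivAt hg hx.1).exp).hasDerivWithinAt) hint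
  rw [h]
  simp [prim]

lemma ibp {f g : ℝ → ℝ} (hf : ContinuousOn f (Ici 0)) (hg : ContinuousOn g (Ici 0)) {a : ℝ}
    (ha : 0 ≤ a) :
    ∫ τ in (0:ℝ)..a, prim f τ * (Real.exp (prim g τ) * g τ)
      = prim f a * Real.exp (prim g a) - ∫ τ in (0:ℝ)..a, f τ * Real.exp (prim g τ) := by
  have hexpc : ContinuousOn (fun τ => Real.exp (prim g τ)) (Ici 0) :=
    Real.continuous_exp.comp_continuousOn (prim_continuousOn hg)
  have hint1 : IntervalIntegrable (fun τ => f τ * Real.exp (prim g τ)) volume 0 a :=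
    ((hf.mono (uIcc_sub ha)).mul (hexpc.mono (uIcc_sub ha))).intervalIntegrable
  have hint2 : IntervalIntegrable (fun τ => prim f τ * (Real.exp (prim g τ) * g τ)) volume 0 a :=
    (((prim_continuousOn hf).mono (uIcc_sub ha)).mul
      ((hexpc.mono (uIcc_sub ha)).mul (hg.mono (uIcc_sub ha)))).intervalIntegrable
  have hcont : ContinuousOn (fun τ => prim f τ * Real.exp (prim g τ)) (Icc 0 a) :=
    ((prim_continuousOn hf).mono Icc_subset_Ici_self).mul (hexpc.mono Icc_subset_Ici_self)
  have h := intervalIntegral.integral_eq_sub_of_hasDeriv_right_of_le ha hcont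
    (fun x hx => ((prim_hasDerivAt hf hx.1).mul
      ((prim_hasDerivAt hg hx.1).exp)).hasDerivWithinAt)
    (hint1.add hint2)
  rw [intervalIntegral.integral_add hint1 hint2] at h
  have h0 : prim f 0 = 0 := by simp [prim]
  rw [h0] at h
  linarith

end GhatAux

section Model
open GhatAux
variable {β φ γ ρ : ℝ → ℝ}

/-- combined exponent split -/
lemma exponent_split (hφc : ContinuousOn φ (Ici 0)) (hγc : ContinuousOn γ (Ici 0))
    (hρc : ContinuousOn ρ (Ici 0)) (B : ℝ) {τ a : ℝ} (hτ : 0 ≤ τ) (ha : 0 ≤ a) :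
    (∫ h in τ..a, (φ h + γ h + B * ρ h))
      = (prim (fun h => φ h + γ h) a + B * prim ρ a)
        - (prim (fun h => φ h + γ h) τ + B * prim ρ τ) := by
  have hc : ContinuousOn (fun h => φ h + γ h + B * ρ h) (Ici 0) :=
    (hφc.add hγc).add (continuousOn_const.mul hρc)
  have e1 : ∀ x : ℝ, 0 ≤ x →
      prim (fun h => φ h + γ h + B * ρ h) x = prim (fun h => φ h + γ h) x + B * prim ρ x := by
    intro x hx
    show (∫ h in (0:ℝ)..x, (φ h + γ h + B * ρ h)) = _
    rw [intervalIntegral.integral_add (intInt (f := fun h => φ h + γ h) (hφc.add hγc) le_rfl hx)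
      ((intInt hρc le_rfl hx).const_mul B), intervalIntegral.integral_const_mul]
    rfl
  rw [prim_split hc hτ ha, e1 a ha, e1 τ hτ]

lemma rSt_eq (hφc : ContinuousOn φ (Ici 0)) (hγc : ContinuousOn γ (Ici 0))
    (hρc : ContinuousOn ρ (Ici 0)) (B : ℝ) {a : ℝ} (ha : 0 ≤ a) :
    rSt β φ γ ρ B a
      = (∫ τ in (0:ℝ)..a, (φ τ + γ τ) * (1 - Real.exp (-(B * prim β τ)))
          * Real.exp (prim (fun h => φ h + γ h) τ + B * prim ρ τ))
        * Real.exp (-(prim (fun h => φ h + γ h) a + B * prim ρ a)) := by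
  rw [rSt, ← intervalIntegral.integral_mul_const]
  refine intervalIntegral.integral_congr fun τ hτ => ?_
  have hτ0 : 0 ≤ τ := (uIcc_sub ha) hτ
  rw [exponent_split hφc hγc hρc B hτ0 ha]
  have : Real.exp (-((prim (fun h => φ h + γ h) a + B * prim ρ a)
      - (prim (fun h => φ h + γ h) τ + B * prim ρ τ)))
      = Real.exp (prim (fun h => φ h + γ h) τ + B * prim ρ τ)
        * Real.exp (-(prim (fun h => φ h + γ h) a + B * prim ρ a)) := by
    rw [← Real.exp_add]; ring_nf
  rw [this, sSt]
  show (φ τ + γ τ) * (1 - Real.exp (-(B * prim β τ))) * _ = _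
  ring

end Model

section Model2
open GhatAux
variable {β φ γ ρ : ℝ → ℝ}

lemma sSt_le_one (hβ0 : ∀ a ∈ Ici (0:ℝ), 0 ≤ β a) {B a : ℝ} (hB : 0 ≤ B) (ha : 0 ≤ a) :
    sSt β B a ≤ 1 := by
  show Real.exp (-(B * prim β a)) ≤ 1
  exact Real.exp_le_one_iff.2 (by nlinarith [prim_nonneg hβ0 ha])

lemma one_sub_sSt_le (hβ0 : ∀ a ∈ Ici (0:ℝ), 0 ≤ β a) {B a : ℝ} (hB : 0 ≤ B) (ha : 0 ≤ a) :
    1 - sSt β B a ≤ B * prim β a := by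
  have h := one_sub_exp_le (B * prim β a)
  show 1 - Real.exp (-(B * prim β a)) ≤ B * prim β a
  exact h

lemma rSt_eq' (hφc : ContinuousOn φ (Ici 0)) (hγc : ContinuousOn γ (Ici 0))
    (hρc : ContinuousOn ρ (Ici 0)) (B : ℝ) {a : ℝ} (ha : 0 ≤ a) :
    rSt β φ γ ρ B a
      = ∫ τ in (0:ℝ)..a, (φ τ + γ τ) * (1 - Real.exp (-(B * prim β τ)))
          * Real.exp ((prim (fun h => φ h + γ h) τ + B * prim ρ τ)
            - (prim (fun h => φ h + γ h) a + B * prim ρ a)) := by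
  rw [rSt]
  refine intervalIntegral.integral_congr fun τ hτ => ?_
  have hτ0 : 0 ≤ τ := (uIcc_sub ha) hτ
  rw [exponent_split hφc hγc hρc B hτ0 ha, neg_sub, sSt]
  rfl

lemma rSt_nonneg (hβ0 : ∀ a ∈ Ici (0:ℝ), 0 ≤ β a) (hφ0 : ∀ a ∈ Ici (0:ℝ), 0 ≤ φ a)
    (hγ0 : ∀ a ∈ Ici (0:ℝ), 0 ≤ γ a) {B a : ℝ} (hB : 0 ≤ B) (ha : 0 ≤ a) :
    0 ≤ rSt β φ γ ρ B a := by
  rw [rSt]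
  refine intervalIntegral.integral_nonneg ha fun u hu => ?_
  have hu0 : (0:ℝ) ≤ u := hu.1
  have h1 : (0:ℝ) ≤ 1 - sSt β B u := by
    have := sSt_le_one hβ0 hB hu0; linarith
  exact mul_nonneg (mul_nonneg (add_nonneg (hφ0 u hu0) (hγ0 u hu0)) h1) (Real.exp_nonneg _)

lemma rSt_le (hβc : ContinuousOn β (Ici 0)) (hφc : ContinuousOn φ (Ici 0))
    (hγc : ContinuousOn γ (Ici 0)) (hρc : ContinuousOn ρ (Ici 0))
    (hβ0 : ∀ a ∈ Ici (0:ℝ), 0 ≤ β a) (hφ0 : ∀ a ∈ Ici (0:ℝ), 0 ≤ φ a)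
    (hγ0 : ∀ a ∈ Ici (0:ℝ), 0 ≤ γ a) (hρ0 : ∀ a ∈ Ici (0:ℝ), 0 ≤ ρ a)
    {B a : ℝ} (hB : 0 ≤ B) (ha : 0 ≤ a) :
    rSt β φ γ ρ B a ≤ B * prim β a := by
  set K := prim (fun h => φ h + γ h) with hK
  set R := prim ρ with hR
  set F := prim β with hF
  have hKc : ContinuousOn K (Ici 0) := prim_continuousOn (hφc.add hγc)
  have hRc : ContinuousOn R (Ici 0) := prim_continuousOn hρc
  have hFc : ContinuousOn F (Ici 0) := prim_continuousOn hβc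
  have hFa : 0 ≤ F a := prim_nonneg hβ0 ha
  rw [rSt_eq' hφc hγc hρc B ha]
  have hstep : (∫ τ in (0:ℝ)..a, (φ τ + γ τ) * (1 - Real.exp (-(B * F τ)))
        * Real.exp ((K τ + B * R τ) - (K a + B * R a)))
      ≤ ∫ τ in (0:ℝ)..a, (B * F a * Real.exp (-(K a))) * (Real.exp (K τ) * (φ τ + γ τ)) := by
    refine intervalIntegral.integral_mono_on ha ?_ ?_ fun u hu => ?_
    · refine ContinuousOn.intervalIntegrable ?_
      refine ContinuousOn.mul (ContinuousOn.mul ((hφc.add hγc).mono (uIcc_sub ha)) ?_) ?_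
      · exact (continuousOn_const.sub (Real.continuous_exp.comp_continuousOn
          ((continuousOn_const.mul (hFc.mono (uIcc_sub ha))).neg)))
      · exact Real.continuous_exp.comp_continuousOn
          (((hKc.mono (uIcc_sub ha)).add (continuousOn_const.mul (hRc.mono (uIcc_sub ha)))).sub
            continuousOn_const)
    · refine ContinuousOn.intervalIntegrable ?_
      exact continuousOn_const.mul ((Real.continuous_exp.comp_continuousOn
        (hKc.mono (uIcc_sub ha))).mul ((hφc.add hγc).mono (uIcc_sub ha)))
    · have hu0 : (0:ℝ) ≤ u := hu.1
      have hua : u ≤ a := hu.2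
      have hφγ : 0 ≤ φ u + γ u := add_nonneg (hφ0 u hu0) (hγ0 u hu0)
      have h1 : 1 - Real.exp (-(B * F u)) ≤ B * F a := by
        have h2 := one_sub_exp_le (B * F u)
        have h3 : F u ≤ F a := prim_mono hβc hβ0 hu0 hua
        nlinarith
      have h1' : 0 ≤ 1 - Real.exp (-(B * F u)) := by
        have : Real.exp (-(B * F u)) ≤ 1 :=
          Real.exp_le_one_iff.2 (by nlinarith [prim_nonneg hβ0 hu0])
        linarith
      have h4 : Real.exp ((K u + B * R u) - (K a + B * R a)) ≤ Real.exp (K u - K a) := by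
        apply Real.exp_le_exp.2
        have : R u ≤ R a := prim_mono hρc hρ0 hu0 hua
        nlinarith
      have h5 : Real.exp (K u - K a) = Real.exp (-(K a)) * Real.exp (K u) := by
        rw [← Real.exp_add]; ring_nf
      calc (φ u + γ u) * (1 - Real.exp (-(B * F u))) * Real.exp ((K u + B * R u) - (K a + B * R a))
          ≤ (φ u + γ u) * (B * F a) * Real.exp (K u - K a) := by
            apply mul_le_mul (mul_le_mul le_rfl h1 h1' hφγ) h4 (Real.exp_nonneg _)
            exact mul_nonneg hφγ (by nlinarith)
        _ = (B * F a * Real.exp (-(K a))) * (Real.exp (K u) * (φ u + γ u)) := by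
            rw [h5]; ring
  rw [intervalIntegral.integral_const_mul, ftc_exp (g := fun h => φ h + γ h) (hφc.add hγc) ha] at hstep
  have hKa0 : Real.exp (-(K a)) * (Real.exp (K a) - 1) = 1 - Real.exp (-(K a)) := by
    rw [mul_sub, ← Real.exp_add]; simp
  have hle1 : 1 - Real.exp (-(K a)) ≤ 1 := by have := Real.exp_nonneg (-(K a)); linarith
  refine le_trans hstep ?_
  calc B * F a * Real.exp (-(K a)) * (Real.exp (K a) - 1)
      = B * F a * (1 - Real.exp (-(K a))) := by rw [mul_assoc, hKa0]
    _ ≤ B * F a * 1 := by nlinarith [mul_nonneg hB hFa]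
    _ = B * F a := mul_one _
end Model2

section Model3
open GhatAux
variable {β φ γ ρ : ℝ → ℝ}

lemma iSt_div_tendsto (hβc : ContinuousOn β (Ici 0)) (hφc : ContinuousOn φ (Ici 0))
    (hγc : ContinuousOn γ (Ici 0)) (hρc : ContinuousOn ρ (Ici 0))
    (hβ0 : ∀ a ∈ Ici (0:ℝ), 0 ≤ β a) (hφ0 : ∀ a ∈ Ici (0:ℝ), 0 ≤ φ a)
    (hγ0 : ∀ a ∈ Ici (0:ℝ), 0 ≤ γ a) (hρ0 : ∀ a ∈ Ici (0:ℝ), 0 ≤ ρ a)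
    {a : ℝ} (ha : 0 < a) :
    Tendsto (fun B => (1/B) * iSt β φ γ ρ B a) (𝓝[>] 0)
      (𝓝 (∫ τ in (0:ℝ)..a, β τ * Real.exp (prim (fun h => φ h + γ h) τ
        - prim (fun h => φ h + γ h) a))) := by
  set K := prim (fun h => φ h + γ h) with hKdef
  set R := prim ρ with hRdef
  set F := prim β with hFdef
  have hφγc : ContinuousOn (fun h => φ h + γ h) (Ici 0) := hφc.add hγc
  have hKc : ContinuousOn K (Ici 0) := prim_continuousOn hφγc
  have hRc : ContinuousOn R (Ici 0) := prim_continuousOn hρc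
  have hFc : ContinuousOn F (Ici 0) := prim_continuousOn hβc
  have hIoc_sub : Ioc (0:ℝ) a ⊆ Ici 0 := fun x hx => le_of_lt hx.1
  -- the B-family of integrands
  set G : ℝ → ℝ → ℝ := fun B τ => (φ τ + γ τ) * ((1 - Real.exp (-(B * F τ))) / B)
    * Real.exp ((K τ + B * R τ) - (K a + B * R a)) with hGdef
  set glim : ℝ → ℝ := fun τ => (φ τ + γ τ) * F τ * Real.exp (K τ - K a) with hglimdef
  -- bound
  obtain ⟨M, hM⟩ := IsCompact.exists_bound_of_continuousOn isCompact_Icc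
    (hφγc.mono (Icc_subset_Ici_self : Icc (0:ℝ) a ⊆ Ici 0))
  have hM0 : 0 ≤ M := le_trans (norm_nonneg _) (hM 0 ⟨le_rfl, ha.le⟩)
  -- dominated convergence
  have hDCT : Tendsto (fun B => ∫ τ in Ioc (0:ℝ) a, G B τ) (𝓝[>] 0)
      (𝓝 (∫ τ in Ioc (0:ℝ) a, glim τ)) := by
    refine tendsto_integral_filter_of_dominated_convergence (fun _ => M * F a) ?_ ?_ ?_ ?_
    · refine Eventually.of_forall fun B => ?_
      refine ContinuousOn.aestronglyMeasurable ?_ measurableSet_Ioc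
      refine ContinuousOn.mul (ContinuousOn.mul ((hφγc.mono hIoc_sub)) ?_) ?_
      · exact (continuousOn_const.sub (Real.continuous_exp.comp_continuousOn
          ((continuousOn_const.mul (hFc.mono hIoc_sub)).neg))).div_const B
      · exact Real.continuous_exp.comp_continuousOn
          (((hKc.mono hIoc_sub).add (continuousOn_const.mul (hRc.mono hIoc_sub))).sub
            continuousOn_const)
    · filter_upwards [self_mem_nhdsWithin] with B hB
      have hBpos : 0 < B := hB
      filter_upwards [ae_restrict_mem measurableSet_Ioc] with τ hτ
      have hτ0 : (0:ℝ) ≤ τ := le_of_lt hτ.1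
      have hτa : τ ≤ a := hτ.2
      have hφγ : 0 ≤ φ τ + γ τ := add_nonneg (hφ0 τ hτ0) (hγ0 τ hτ0)
      have hφγM : φ τ + γ τ ≤ M := le_trans (le_abs_self _) (hM τ ⟨hτ0, hτa⟩)
      have hFτ : 0 ≤ F τ := prim_nonneg hβ0 hτ0
      have hFτa : F τ ≤ F a := prim_mono hβc hβ0 hτ0 hτa
      have hd0 : 0 ≤ (1 - Real.exp (-(B * F τ))) / B := by
        apply div_nonneg _ hBpos.le
        have : Real.exp (-(B * F τ)) ≤ 1 := Real.exp_le_one_iff.2 (by nlinarith)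
        linarith
      have hd1 : (1 - Real.exp (-(B * F τ))) / B ≤ F τ := by
        rw [div_le_iff₀ hBpos]
        have := one_sub_exp_le (B * F τ); nlinarith
      have hexp1 : Real.exp ((K τ + B * R τ) - (K a + B * R a)) ≤ 1 := by
        apply Real.exp_le_one_iff.2
        have h1 : K τ ≤ K a := prim_mono hφγc
          (fun x hx => add_nonneg (hφ0 x hx) (hγ0 x hx)) hτ0 hτa
        have h2 : R τ ≤ R a := prim_mono hρc hρ0 hτ0 hτa
        nlinarith
      have hGnn : 0 ≤ G B τ :=
        mul_nonneg (mul_nonneg hφγ hd0) (Real.exp_nonneg _)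
      rw [Real.norm_eq_abs, abs_of_nonneg hGnn]
      calc G B τ ≤ (φ τ + γ τ) * F τ * 1 := by
            apply mul_le_mul (mul_le_mul le_rfl hd1 hd0 hφγ) hexp1 (Real.exp_nonneg _)
            exact mul_nonneg hφγ hFτ
        _ = (φ τ + γ τ) * F τ := mul_one _
        _ ≤ M * F a := mul_le_mul hφγM hFτa hFτ hM0
    · exact (integrableOn_const measure_Ioc_lt_top.ne)
    · filter_upwards [ae_restrict_mem measurableSet_Ioc] with τ hτ
      have hexp : Tendsto (fun B : ℝ => Real.exp ((K τ + B * R τ) - (K a + B * R a)))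
          (𝓝[>] 0) (𝓝 (Real.exp (K τ - K a))) := by
        have hc : Continuous (fun B : ℝ => Real.exp ((K τ + B * R τ) - (K a + B * R a))) := by
          continuity
        have h0 := hc.tendsto 0
        simp only [zero_mul, add_zero] at h0
        exact h0.mono_left nhdsWithin_le_nhds
      exact ((tendsto_const_nhds.mul (tendsto_one_sub_exp_div (F τ))).mul hexp)
  -- identify the limit of the r-part
  have hIoc_eq : (∫ τ in Ioc (0:ℝ) a, glim τ)
      = F a - ∫ τ in (0:ℝ)..a, β τ * Real.exp (K τ - K a) := by
    have h1 : (∫ τ in Ioc (0:ℝ) a, glim τ) = ∫ τ in (0:ℝ)..a, glim τ :=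
      (intervalIntegral.integral_of_le ha.le).symm
    have h2 : (∫ τ in (0:ℝ)..a, glim τ)
        = ∫ τ in (0:ℝ)..a, (prim β τ * (Real.exp (K τ) * (φ τ + γ τ))) * Real.exp (-(K a)) := by
      refine intervalIntegral.integral_congr fun τ hτ => ?_
      have : Real.exp (K τ - K a) = Real.exp (K τ) * Real.exp (-(K a)) := by
        rw [← Real.exp_add]; ring_nf
      simp only [hglimdef, this]; ring
    have h3 : (∫ τ in (0:ℝ)..a, β τ * Real.exp (K τ - K a))
        = (∫ τ in (0:ℝ)..a, β τ * Real.exp (K τ)) * Real.exp (-(K a)) := by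
      rw [← intervalIntegral.integral_mul_const]
      refine intervalIntegral.integral_congr fun τ hτ => ?_
      have : Real.exp (K τ - K a) = Real.exp (K τ) * Real.exp (-(K a)) := by
        rw [← Real.exp_add]; ring_nf
      rw [this]; ring
    rw [h1, h2, intervalIntegral.integral_mul_const, ibp hβc hφγc ha.le, h3]
    have h4 : Real.exp (K a) * Real.exp (-(K a)) = 1 := by
      rw [← Real.exp_add]; simp
    have : prim β a * Real.exp (prim (fun h => φ h + γ h) a) * Real.exp (-(K a))
        = F a * (Real.exp (K a) * Real.exp (-(K a))) := by rw [← hKdef, ← hFdef]; ring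
    rw [sub_mul, this, h4, mul_one]
  -- the r-part tendsto
  have hT2 : Tendsto (fun B => (1/B) * rSt β φ γ ρ B a) (𝓝[>] 0)
      (𝓝 (F a - ∫ τ in (0:ℝ)..a, β τ * Real.exp (K τ - K a))) := by
    rw [← hIoc_eq]
    refine Tendsto.congr' ?_ hDCT
    filter_upwards [self_mem_nhdsWithin] with B hB
    have hBpos : (0:ℝ) < B := hB
    rw [rSt_eq' hφc hγc hρc B ha.le, ← intervalIntegral.integral_const_mul]
    rw [intervalIntegral.integral_of_le ha.le]
    refine setIntegral_congr_fun measurableSet_Ioc fun τ hτ => ?_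
    simp only [hGdef]
    field_simp
    rfl
  -- the s-part tendsto
  have hT1 : Tendsto (fun B => (1 - Real.exp (-(B * F a))) / B) (𝓝[>] 0) (𝓝 (F a)) :=
    tendsto_one_sub_exp_div (F a)
  have hcomb := hT1.sub hT2
  rw [show F a - (F a - ∫ τ in (0:ℝ)..a, β τ * Real.exp (K τ - K a))
      = ∫ τ in (0:ℝ)..a, β τ * Real.exp (K τ - K a) by ring] at hcomb
  refine Tendsto.congr' ?_ hcomb
  filter_upwards [self_mem_nhdsWithin] with B hB
  have hBpos : (0:ℝ) < B := hB
  have hs : sSt β B a = Real.exp (-(B * F a)) := rfl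
  rw [iSt, hs]
  field_simp
end Model3

section Model4
open GhatAux
variable {β φ γ ρ : ℝ → ℝ}

lemma iSt_contOn (hβc : ContinuousOn β (Ici 0)) (hφc : ContinuousOn φ (Ici 0))
    (hγc : ContinuousOn γ (Ici 0)) (hρc : ContinuousOn ρ (Ici 0)) (B : ℝ) :
    ContinuousOn (fun a => iSt β φ γ ρ B a) (Ici 0) := by
  have hφγc : ContinuousOn (fun h => φ h + γ h) (Ici 0) := hφc.add hγc
  have hKc := prim_continuousOn hφγc
  have hRc := prim_continuousOn hρc
  have hFc := prim_continuousOn hβc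
  have hs : ContinuousOn (fun a => sSt β B a) (Ici 0) :=
    Real.continuous_exp.comp_continuousOn ((continuousOn_const.mul hFc).neg)
  have hq : ContinuousOn (fun τ => (φ τ + γ τ) * (1 - Real.exp (-(B * prim β τ)))
      * Real.exp (prim (fun h => φ h + γ h) τ + B * prim ρ τ)) (Ici 0) :=
    (hφγc.mul (continuousOn_const.sub (Real.continuous_exp.comp_continuousOn
      ((continuousOn_const.mul hFc).neg)))).mul
      (Real.continuous_exp.comp_continuousOn (hKc.add (continuousOn_const.mul hRc)))
  have hr : ContinuousOn (fun a => rSt β φ γ ρ B a) (Ici 0) := by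
    refine ContinuousOn.congr ?_ (fun a ha => rSt_eq hφc hγc hρc B ha)
    exact (prim_continuousOn hq).mul (Real.continuous_exp.comp_continuousOn
      ((hKc.add (continuousOn_const.mul hRc)).neg))
  exact (continuousOn_const.sub hs).sub hr
end Model4

/-- The auxiliary function `Ĝ(B) = H(B)/B = (1/B) ∫₀^∞ i_B(a) p∞(a) da`. -/
noncomputable def GhatFun (β φ γ ρ pinf : ℝ → ℝ) (B : ℝ) : ℝ :=
  (1 / B) * ∫ a in Ioi (0:ℝ), iSt β φ γ ρ B a * pinf a

/-- The limit of `Ĝ(B)` as `B → 0⁺` is the basic reproductive number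
`R₀ = ∫₀^∞ ∫₀^a p∞(a) β(τ) exp(−∫_τ^a (φ+γ)) dτ da`. -/
theorem Ghat_limit_at_zero_is_R0
    (β φ γ ρ pinf : ℝ → ℝ)
    (hβc : ContinuousOn β (Ici 0)) (hφc : ContinuousOn φ (Ici 0))
    (hγc : ContinuousOn γ (Ici 0)) (hρc : ContinuousOn ρ (Ici 0))
    (hβ0 : ∀ a ∈ Ici (0:ℝ), 0 ≤ β a) (hφ0 : ∀ a ∈ Ici (0:ℝ), 0 ≤ φ a)
    (hγ0 : ∀ a ∈ Ici (0:ℝ), 0 ≤ γ a) (hρ0 : ∀ a ∈ Ici (0:ℝ), 0 ≤ ρ a)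
    (hp0 : ∀ a ∈ Ici (0:ℝ), 0 ≤ pinf a)
    (hp_int : IntegrableOn pinf (Ioi 0))
    (hp_one : ∫ a in Ioi (0:ℝ), pinf a = 1)
    (hβ_int : IntegrableOn (fun a => pinf a * ∫ h in (0:ℝ)..a, β h) (Ioi 0)) :
    Tendsto (GhatFun β φ γ ρ pinf) (𝓝[>] 0)
      (𝓝 (∫ a in Ioi (0:ℝ), ∫ τ in (0:ℝ)..a,
        pinf a * β τ * Real.exp (-(∫ h in τ..a, (φ h + γ h))))) := by
  open GhatAux in
  have hφγc : ContinuousOn (fun h => φ h + γ h) (Ici 0) := hφc.add hγc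
  have hIoi_sub : Ioi (0:ℝ) ⊆ Ici 0 := fun x hx => (le_of_lt (show (0:ℝ) < x from hx) : (0:ℝ) ≤ x)
  have hmain : Tendsto (fun B => ∫ a in Ioi (0:ℝ), (1/B) * (iSt β φ γ ρ B a * pinf a)) (𝓝[>] 0)
      (𝓝 (∫ a in Ioi (0:ℝ), (∫ τ in (0:ℝ)..a, β τ
        * Real.exp (GhatAux.prim (fun h => φ h + γ h) τ
          - GhatAux.prim (fun h => φ h + γ h) a)) * pinf a)) := by
    refine tendsto_integral_filter_of_dominated_convergence
      (fun a => 2 * (pinf a * GhatAux.prim β a)) ?_ ?_ ?_ ?_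
    · filter_upwards [self_mem_nhdsWithin] with B hB
      exact ((((iSt_contOn hβc hφc hγc hρc B).mono hIoi_sub).aestronglyMeasurable
        measurableSet_Ioi).mul hp_int.1).const_mul _
    · filter_upwards [self_mem_nhdsWithin] with B hB
      have hBpos : (0:ℝ) < B := hB
      filter_upwards [ae_restrict_mem measurableSet_Ioi] with a haa
      have ha0 : (0:ℝ) ≤ a := le_of_lt haa
      have h1 : |iSt β φ γ ρ B a| ≤ 2 * (B * GhatAux.prim β a) := by
        have hs1 : sSt β B a ≤ 1 := sSt_le_one hβ0 hBpos.le ha0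
        have hs2 : 1 - sSt β B a ≤ B * GhatAux.prim β a := one_sub_sSt_le hβ0 hBpos.le ha0
        have hs0 : (0:ℝ) < sSt β B a := Real.exp_pos _
        have hr0 : 0 ≤ rSt β φ γ ρ B a := rSt_nonneg hβ0 hφ0 hγ0 hBpos.le ha0
        have hr1 : rSt β φ γ ρ B a ≤ B * GhatAux.prim β a :=
          rSt_le hβc hφc hγc hρc hβ0 hφ0 hγ0 hρ0 hBpos.le ha0
        rw [iSt, abs_le]; constructor <;> nlinarith
      have hpnn : 0 ≤ pinf a := hp0 a ha0
      calc ‖(1/B) * (iSt β φ γ ρ B a * pinf a)‖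
          = (1/B) * (|iSt β φ γ ρ B a| * pinf a) := by
            rw [Real.norm_eq_abs, abs_mul, abs_mul, abs_of_nonneg hpnn,
              abs_of_pos (by positivity : (0:ℝ) < 1/B)]
        _ ≤ (1/B) * ((2 * (B * GhatAux.prim β a)) * pinf a) :=
            mul_le_mul_of_nonneg_left (mul_le_mul_of_nonneg_right h1 hpnn) (by positivity)
        _ = 2 * (pinf a * GhatAux.prim β a) := by field_simp
    · exact hβ_int.const_mul 2
    · filter_upwards [ae_restrict_mem measurableSet_Ioi] with a haa
      simpa [mul_assoc] using
        (iSt_div_tendsto hβc hφc hγc hρc hβ0 hφ0 hγ0 hρ0 haa).mul_const (pinf a)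
  have hfun : ∀ B : ℝ, GhatFun β φ γ ρ pinf B
      = ∫ a in Ioi (0:ℝ), (1/B) * (iSt β φ γ ρ B a * pinf a) := by
    intro B; rw [GhatFun, MeasureTheory.integral_const_mul]
  have htarget : (∫ a in Ioi (0:ℝ), (∫ τ in (0:ℝ)..a, β τ
        * Real.exp (GhatAux.prim (fun h => φ h + γ h) τ
          - GhatAux.prim (fun h => φ h + γ h) a)) * pinf a)
      = ∫ a in Ioi (0:ℝ), ∫ τ in (0:ℝ)..a,
          pinf a * β τ * Real.exp (-(∫ h in τ..a, (φ h + γ h))) := by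
    refine setIntegral_congr_fun measurableSet_Ioi fun a haa => ?_
    have ha0 : (0:ℝ) ≤ a := le_of_lt haa
    rw [← intervalIntegral.integral_mul_const]
    refine intervalIntegral.integral_congr fun τ hτ => ?_
    have hτ0 : (0:ℝ) ≤ τ := uIcc_sub ha0 hτ
    rw [prim_split hφγc hτ0 ha0, neg_sub]; ring
  refine Tendsto.congr (fun B => (hfun B).symm) ?_
  rw [← htarget]
  exact hmain
end

section
/- Let β : [0,∞) → ℝ and B : [0,∞) → ℝ be continuous, and on the region {(t,a) : t > a ≥ 0} define s(t,a) = exp(−∫₀^a β(h) B(h+t−a) dh) and q(t,a) = ∫₀^a β(h) B(h+t−a) s(h+t−a, h) dh. Then q(t,0) = 0 for all t > 0, q(t,a) = 1 − s(t,a) for all t > a, and at every point (t,a) with t > a the directional derivative of q in the direction (1,1) exists and equals β(a) B(t) s(t,a); that is, (∂ₜ + ∂ₐ) q(t,a) = β(a) B(t) s(t,a). -/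
open Set MeasureTheory

/-- The method-of-characteristics susceptible fraction
`s(t,a) = exp(−∫₀^a β(h) B(h+t−a) dh)` for a given force of infection `B`. -/
noncomputable def sChar (β B : ℝ → ℝ) (t a : ℝ) : ℝ :=
  Real.exp (-(∫ h in (0:ℝ)..a, β h * B (h + t - a)))

/-- The combined infected-plus-recovered fraction
`q(t,a) = ∫₀^a β(h) B(h+t−a) s(h+t−a, h) dh`. -/
noncomputable def qChar (β B : ℝ → ℝ) (t a : ℝ) : ℝ :=
  ∫ h in (0:ℝ)..a, β h * B (h + t - a) * sChar β B (h + t - a) h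

private lemma G_hasDerivAt (g : ℝ → ℝ) (hg : Continuous g) (x : ℝ) :
    HasDerivAt (fun y => ∫ u in (0:ℝ)..y, g u) (g x) x :=
  (intervalIntegral.integral_hasStrictDerivAt_right
    (hg.intervalIntegrable 0 x) (hg.stronglyMeasurableAtFilter _ _) hg.continuousAt).hasDerivAt

private lemma key (g : ℝ → ℝ) (hg : Continuous g) (a : ℝ) :
    ∫ h in (0:ℝ)..a, g h * Real.exp (-(∫ u in (0:ℝ)..h, g u)) =
      1 - Real.exp (-(∫ u in (0:ℝ)..a, g u)) := by
  set G : ℝ → ℝ := fun y => ∫ u in (0:ℝ)..y, g u with hG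
  have hGc : Continuous G :=
    continuous_iff_continuousAt.2 fun x => (G_hasDerivAt g hg x).continuousAt
  have hF : ∀ x : ℝ, HasDerivAt (fun y => 1 - Real.exp (-(G y)))
      (g x * Real.exp (-(G x))) x := by
    intro x
    have h1 : HasDerivAt (fun y => Real.exp (-(G y)))
        (Real.exp (-(G x)) * (-(g x))) x :=
      ((G_hasDerivAt g hg x).neg).exp
    have := h1.const_sub 1
    exact this.congr_deriv (by ring)
  have hcont : Continuous (fun h => g h * Real.exp (-(G h))) :=
    hg.mul (hGc.neg.rexp)
  have := intervalIntegral.integral_eq_sub_of_hasDerivAt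
    (f := fun y => 1 - Real.exp (-(G y)))
    (fun x _ => hF x) (hcont.intervalIntegrable 0 a)
  rw [this]
  simp [hG, intervalIntegral.integral_same]

private lemma qChar_eq (β B : ℝ → ℝ) (hβ : Continuous β) (hB : Continuous B) (t a : ℝ) :
    qChar β B t a = 1 - sChar β B t a := by
  have hint : ∀ h : ℝ, β h * B (h + t - a) * sChar β B (h + t - a) h =
      (fun u => β u * B (u + t - a)) h *
        Real.exp (-(∫ u in (0:ℝ)..h, β u * B (u + t - a))) := by
    intro h
    simp only [sChar]
    congr 3
    apply intervalIntegral.integral_congr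
    intro u _
    dsimp only
    congr 2
    ring
  have hgc : Continuous (fun u => β u * B (u + t - a)) :=
    hβ.mul (hB.comp (by continuity))
  calc qChar β B t a
      = ∫ h in (0:ℝ)..a, (fun u => β u * B (u + t - a)) h *
          Real.exp (-(∫ u in (0:ℝ)..h, β u * B (u + t - a))) := by
        unfold qChar
        exact intervalIntegral.integral_congr fun h _ => hint h
    _ = 1 - Real.exp (-(∫ u in (0:ℝ)..a, β u * B (u + t - a))) := key _ hgc a
    _ = 1 - sChar β B t a := rfl

/-- On the region `t > a ≥ 0`: `q(t,0) = 0`, `q(t,a) = 1 − s(t,a)`, and the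
directional derivative of `q` along `(1,1)` exists and equals `β(a) B(t) s(t,a)`. -/
theorem qChar_solves_transport
    (β B : ℝ → ℝ) (hβ : Continuous β) (hB : Continuous B) :
    (∀ t : ℝ, 0 < t → qChar β B t 0 = 0) ∧
    (∀ t a : ℝ, 0 ≤ a → a < t → qChar β B t a = 1 - sChar β B t a) ∧
    (∀ t a : ℝ, 0 ≤ a → a < t →
        HasDerivAt (fun τ => qChar β B (t + τ) (a + τ))
          (β a * B t * sChar β B t a) 0) := by
  refine ⟨fun t _ => by simp [qChar], fun t a _ _ => qChar_eq β B hβ hB t a, ?_⟩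
  intro t a _ _
  set g : ℝ → ℝ := fun u => β u * B (u + t - a) with hgdef
  have hgc : Continuous g := hβ.mul (hB.comp (by continuity))
  have heq : (fun τ => qChar β B (t + τ) (a + τ)) =
      fun τ => 1 - Real.exp (-(∫ u in (0:ℝ)..(a + τ), g u)) := by
    funext τ
    rw [qChar_eq β B hβ hB]
    simp only [sChar]
    congr 3
    apply intervalIntegral.integral_congr
    intro u _
    simp only [hgdef]
    congr 2
    ring
  rw [heq]
  have h1 : HasDerivAt (fun τ : ℝ => a + τ) 1 0 := by
    simpa using (hasDerivAt_id (0:ℝ)).const_add a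
  have hG : HasDerivAt (fun y => ∫ u in (0:ℝ)..y, g u) (g a) (a + 0) := by
    simpa using G_hasDerivAt g hgc a
  have h3 := (((hG.comp 0 h1).neg).exp).const_sub 1
  refine h3.congr_deriv ?_
  symm
  have hat : a + t - a = t := by ring
  simp [hgdef, sChar, hat]
  ring
end

section
/- Let φ, γ, ρ : [0,∞) → ℝ be continuous and let B ∈ ℝ. Define the matrix-valued function M(a) = [[−(φ(a)+γ(a)), Bρ(a)], [φ(a)+γ(a), −Bρ(a)]] and set E(a) = exp(−∫₀^a (φ(h)+γ(h)+Bρ(h)) dh). Then the vector functions X⁽¹⁾(a) = (E(a), −E(a)) and X⁽²⁾(a) = (1 − E(a) − ∫₀^a (φ(τ)+γ(τ)) exp(−∫_τ^a (φ(h)+γ(h)+Bρ(h)) dh) dτ, E(a) + ∫₀^a (φ(τ)+γ(τ)) exp(−∫_τ^a (φ(h)+γ(h)+Bρ(h)) dh) dτ) both satisfy the homogeneous linear system X'(a) = M(a) X(a) for all a ≥ 0, with initial conditions X⁽¹⁾(0) = (1, −1) and X⁽²⁾(0) = (0, 1); in particular they are linearly independent solutions. -/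
open Set MeasureTheory

/-- `E(a) = exp(−∫₀^a (φ(h)+γ(h)+Bρ(h)) dh)`. -/
noncomputable def Efun (φ γ ρ : ℝ → ℝ) (B a : ℝ) : ℝ :=
  Real.exp (-(∫ h in (0:ℝ)..a, (φ h + γ h + B * ρ h)))

/-- `J(a) = ∫₀^a (φ(τ)+γ(τ)) exp(−∫_τ^a (φ(h)+γ(h)+Bρ(h)) dh) dτ`. -/
noncomputable def Jfun (φ γ ρ : ℝ → ℝ) (B a : ℝ) : ℝ :=
  ∫ τ in (0:ℝ)..a, (φ τ + γ τ) * Real.exp (-(∫ h in τ..a, (φ h + γ h + B * ρ h)))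

/-- First fundamental solution `X⁽¹⁾(a) = (E(a), −E(a))`. -/
noncomputable def Xone (φ γ ρ : ℝ → ℝ) (B a : ℝ) : ℝ × ℝ :=
  (Efun φ γ ρ B a, -Efun φ γ ρ B a)

/-- Second fundamental solution `X⁽²⁾(a) = (1 − E(a) − J(a), E(a) + J(a))`. -/
noncomputable def Xtwo (φ γ ρ : ℝ → ℝ) (B a : ℝ) : ℝ × ℝ :=
  (1 - Efun φ γ ρ B a - Jfun φ γ ρ B a, Efun φ γ ρ B a + Jfun φ γ ρ B a)

/-- `X⁽¹⁾` and `X⁽²⁾` solve the homogeneous linear system `X' = M(a)X` with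
`M(a) = [[−(φ(a)+γ(a)), Bρ(a)], [φ(a)+γ(a), −Bρ(a)]]` for all `a ≥ 0`, with
`X⁽¹⁾(0) = (1,−1)` and `X⁽²⁾(0) = (0,1)`; in particular they are linearly
independent. -/
theorem fundamental_solutions_homogeneous_system
    (φ γ ρ : ℝ → ℝ) (B : ℝ)
    (hφ : ContinuousOn φ (Ici 0)) (hγ : ContinuousOn γ (Ici 0))
    (hρ : ContinuousOn ρ (Ici 0)) :
    (∀ a ∈ Ici (0:ℝ),
        HasDerivWithinAt (fun x => (Xone φ γ ρ B x).1)
          (-(φ a + γ a) * (Xone φ γ ρ B a).1 + B * ρ a * (Xone φ γ ρ B a).2)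
          (Ici 0) a) ∧
    (∀ a ∈ Ici (0:ℝ),
        HasDerivWithinAt (fun x => (Xone φ γ ρ B x).2)
          ((φ a + γ a) * (Xone φ γ ρ B a).1 - B * ρ a * (Xone φ γ ρ B a).2)
          (Ici 0) a) ∧
    (∀ a ∈ Ici (0:ℝ),
        HasDerivWithinAt (fun x => (Xtwo φ γ ρ B x).1)
          (-(φ a + γ a) * (Xtwo φ γ ρ B a).1 + B * ρ a * (Xtwo φ γ ρ B a).2)
          (Ici 0) a) ∧
    (∀ a ∈ Ici (0:ℝ),
        HasDerivWithinAt (fun x => (Xtwo φ γ ρ B x).2)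
          ((φ a + γ a) * (Xtwo φ γ ρ B a).1 - B * ρ a * (Xtwo φ γ ρ B a).2)
          (Ici 0) a) ∧
    Xone φ γ ρ B 0 = (1, -1) ∧ Xtwo φ γ ρ B 0 = (0, 1) ∧
    (∀ c₁ c₂ : ℝ,
        (∀ a ∈ Ici (0:ℝ), c₁ • Xone φ γ ρ B a + c₂ • Xtwo φ γ ρ B a = (0, 0)) →
        c₁ = 0 ∧ c₂ = 0) := by
  classical
  have hmem : ∀ x : ℝ, max x 0 ∈ Ici (0:ℝ) := fun x => Set.mem_Ici.2 (le_max_right _ _)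
  have hcmax : Continuous (fun x : ℝ => max x 0) := continuous_id.max continuous_const
  have hcφ : Continuous (fun x => φ (max x 0)) := hφ.comp_continuous hcmax hmem
  have hcγ : Continuous (fun x => γ (max x 0)) := hγ.comp_continuous hcmax hmem
  have hcρ : Continuous (fun x => ρ (max x 0)) := hρ.comp_continuous hcmax hmem
  set ψ : ℝ → ℝ := fun x => φ (max x 0) + γ (max x 0) + B * ρ (max x 0) with hψdef
  set g : ℝ → ℝ := fun x => φ (max x 0) + γ (max x 0) with hgdef
  have hcψ : Continuous ψ := (hcφ.add hcγ).add (continuous_const.mul hcρ)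
  have hcg : Continuous g := hcφ.add hcγ
  set F : ℝ → ℝ := fun a => ∫ h in (0:ℝ)..a, ψ h with hFdef
  have hF : ∀ a, HasDerivAt F (ψ a) a := fun a =>
    (hcψ.integral_hasStrictDerivAt 0 a).hasDerivAt
  have hFc : Continuous F :=
    continuous_iff_continuousAt.2 fun a => (hF a).continuousAt
  set Et : ℝ → ℝ := fun a => Real.exp (-(F a)) with hEtdef
  have hEt : ∀ a, HasDerivAt Et (-ψ a * Et a) a := by
    intro a
    have h := ((hF a).neg).exp
    simpa [Et, mul_comm, mul_left_comm, mul_assoc] using h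
  set G : ℝ → ℝ := fun a => ∫ τ in (0:ℝ)..a, g τ * Real.exp (F τ) with hGdef
  have hcint : Continuous fun τ => g τ * Real.exp (F τ) := hcg.mul (Real.continuous_exp.comp hFc)
  have hG : ∀ a, HasDerivAt G (g a * Real.exp (F a)) a := fun a =>
    (hcint.integral_hasStrictDerivAt 0 a).hasDerivAt
  set Jt : ℝ → ℝ := fun a => Et a * G a with hJtdef
  have hEtexp : ∀ a, Et a * Real.exp (F a) = 1 := by
    intro a
    simp [Et, Real.exp_neg, inv_mul_cancel₀ (Real.exp_ne_zero _)]
  have hJt : ∀ a, HasDerivAt Jt (-ψ a * Jt a + g a) a := by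
    intro a
    have h := (hEt a).mul (hG a)
    have hval : -ψ a * Et a * G a + Et a * (g a * Real.exp (F a)) = -ψ a * Jt a + g a := by
      have h1 : Et a * (g a * Real.exp (F a)) = g a * (Et a * Real.exp (F a)) := by ring
      rw [h1, hEtexp a]
      simp only [Jt]; ring
    rw [hval] at h
    exact h
  have hψint : ∀ u v : ℝ, IntervalIntegrable ψ volume u v := fun u v =>
    hcψ.intervalIntegrable u v
  have hψeq : ∀ x : ℝ, 0 ≤ x → ψ x = φ x + γ x + B * ρ x := by
    intro x hx; simp [ψ, max_eq_left hx]
  have hgeq : ∀ x : ℝ, 0 ≤ x → g x = φ x + γ x := by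
    intro x hx; simp [g, max_eq_left hx]
  have hFeq : ∀ a : ℝ, 0 ≤ a → ∀ τ : ℝ, 0 ≤ τ → τ ≤ a →
      (∫ h in τ..a, (φ h + γ h + B * ρ h)) = F a - F τ := by
    intro a ha τ hτ hτa
    have h1 : (∫ h in τ..a, (φ h + γ h + B * ρ h)) = ∫ h in τ..a, ψ h := by
      apply intervalIntegral.integral_congr
      intro h hh
      rw [uIcc_of_le hτa] at hh
      exact (hψeq h (le_trans hτ hh.1)).symm
    rw [h1]
    exact (intervalIntegral.integral_interval_sub_left (hψint 0 a) (hψint 0 τ)).symm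
  have hEeq : ∀ a ∈ Ici (0:ℝ), Efun φ γ ρ B a = Et a := by
    intro a ha
    have h := hFeq a ha 0 le_rfl ha
    simp only [Efun, Et]
    rw [h]
    simp [F]
  have hJeq : ∀ a ∈ Ici (0:ℝ), Jfun φ γ ρ B a = Jt a := by
    intro a ha
    have h1 : Jfun φ γ ρ B a = ∫ τ in (0:ℝ)..a, Et a * (g τ * Real.exp (F τ)) := by
      apply intervalIntegral.integral_congr
      intro τ hτ
      rw [uIcc_of_le ha] at hτ
      show (φ τ + γ τ) * Real.exp (-(∫ h in τ..a, (φ h + γ h + B * ρ h)))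
          = Et a * (g τ * Real.exp (F τ))
      rw [hFeq a ha τ hτ.1 hτ.2, hgeq τ hτ.1]
      simp only [Et, neg_sub, Real.exp_sub, Real.exp_neg]
      ring
    rw [h1, intervalIntegral.integral_const_mul]
  have hEone : ∀ a ∈ Ici (0:ℝ),
      HasDerivWithinAt (fun x => Efun φ γ ρ B x) (-ψ a * Et a) (Ici 0) a := by
    intro a ha
    exact ((hEt a).hasDerivWithinAt).congr hEeq (hEeq a ha)
  have hJone : ∀ a ∈ Ici (0:ℝ),
      HasDerivWithinAt (fun x => Jfun φ γ ρ B x) (-ψ a * Jt a + g a) (Ici 0) a := by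
    intro a ha
    exact ((hJt a).hasDerivWithinAt).congr hJeq (hJeq a ha)
  refine ⟨?_, ?_, ?_, ?_, ?_, ?_, ?_⟩
  · intro a ha
    have h := hEone a ha
    have hv : -(φ a + γ a) * (Xone φ γ ρ B a).1 + B * ρ a * (Xone φ γ ρ B a).2
        = -ψ a * Et a := by
      simp only [Xone]
      rw [hEeq a ha, hψeq a ha]; ring
    rw [hv]
    exact h
  · intro a ha
    have h := (hEone a ha).neg
    have hv : (φ a + γ a) * (Xone φ γ ρ B a).1 - B * ρ a * (Xone φ γ ρ B a).2
        = -(-ψ a * Et a) := by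
      simp only [Xone]
      rw [hEeq a ha, hψeq a ha]; ring
    rw [hv]
    exact h
  · intro a ha
    have h := ((hasDerivWithinAt_const a (Ici (0:ℝ)) (1:ℝ)).sub (hEone a ha)).sub
      (hJone a ha)
    have hv : -(φ a + γ a) * (Xtwo φ γ ρ B a).1 + B * ρ a * (Xtwo φ γ ρ B a).2
        = 0 - -ψ a * Et a - (-ψ a * Jt a + g a) := by
      simp only [Xtwo]
      rw [hEeq a ha, hJeq a ha, hψeq a ha, hgeq a ha]; ring
    rw [hv]
    exact h
  · intro a ha
    have h := (hEone a ha).add (hJone a ha)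
    have hv : (φ a + γ a) * (Xtwo φ γ ρ B a).1 - B * ρ a * (Xtwo φ γ ρ B a).2
        = -ψ a * Et a + (-ψ a * Jt a + g a) := by
      simp only [Xtwo]
      rw [hEeq a ha, hJeq a ha, hψeq a ha, hgeq a ha]; ring
    rw [hv]
    exact h
  · simp [Xone, Efun]
  · simp [Xtwo, Efun, Jfun]
  · intro c₁ c₂ hc
    have h0 := hc 0 self_mem_Ici
    simp [Xone, Xtwo, Efun, Jfun, Prod.ext_iff, Prod.smul_mk] at h0
    obtain ⟨h1, h2⟩ := h0
    constructor <;> nlinarith [h1, h2]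
end
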